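/- arXiv:1511.08584 — 8 statements merged into one kernel-verified Lean document; each statement's English description precedes it below -/
import Mathlib

section
/- Let Ω ⊆ ℂ be a domain with Ω ≠ ℂ, z₀ ∈ ∂Ω, z ∈ Ω, and let d = |z - z₀| > 0. The set F(Ω, z, z₀) of holomorphic functions f on Ω whose Taylor series at z has radius of convergence at most d is a Gδ subset of the space H(Ω) of holomorphic functions on Ω with the topology of uniform convergence on compact subsets. -/
open Complex Metric Set Filter
open scoped NNReal ENNReal

private lemma iter_deriv_diffOn {Ω : Set ℂ} (hΩo : IsOpen Ω) {f : ℂ → ℂ}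
    (hf : DifferentiableOn ℂ f Ω) (n : ℕ) : DifferentiableOn ℂ (deriv^[n] f) Ω := by
  induction n with
  | zero => exact hf
  | succ m ih =>
    rw [Function.iterate_succ_apply']
    exact ((ih.analyticOnNhd hΩo).deriv).differentiableOn

private lemma bridge {f : ℂ → ℂ} {p : FormalMultilinearSeries ℂ ℂ ℂ} {z : ℂ}
    (hp : HasFPowerSeriesAt f p z) (n : ℕ) :
    (n.factorial : ℝ) * ‖p n‖ = ‖deriv^[n] f z‖ := by
  obtain ⟨r, hr⟩ := hp
  have h := hr.factorial_smul (y := (1 : ℂ)) n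
  have h1 : p n (fun _ => (1:ℂ)) = p.coeff n := rfl
  have h2 : iteratedFDeriv ℂ n f z (fun _ => (1:ℂ)) = deriv^[n] f z := by
    rw [← iteratedDeriv_eq_iteratedFDeriv, iteratedDeriv_eq_iterate]
  rw [h1, h2] at h
  rw [p.norm_apply_eq_norm_coef, ← h]
  rw [← Nat.cast_smul_eq_nsmul ℂ, norm_smul]
  simp

private lemma cont_iter {Ω : Set ℂ} (hΩo : IsOpen Ω) {z : ℂ} (hz : z ∈ Ω) (n : ℕ) :
    Continuous (fun f : {g : UniformOnFun ℂ ℂ {K : Set ℂ | K ⊆ Ω ∧ IsCompact K} //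
        DifferentiableOn ℂ (UniformOnFun.toFun _ g) Ω} =>
      deriv^[n] (UniformOnFun.toFun _ f.1) z) := by
  set 𝔖 : Set (Set ℂ) := {K : Set ℂ | K ⊆ Ω ∧ IsCompact K} with h𝔖
  rw [continuous_iff_continuousAt]
  intro f
  have h0 : Tendsto (fun g : {g : UniformOnFun ℂ ℂ 𝔖 //
      DifferentiableOn ℂ (UniformOnFun.toFun _ g) Ω} => g.1) (nhds f) (nhds f.1) :=
    continuousAt_subtype_val
  rw [UniformOnFun.tendsto_iff_tendstoUniformlyOn] at h0
  have hlu : TendstoLocallyUniformlyOn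
      (fun g : {g : UniformOnFun ℂ ℂ 𝔖 // DifferentiableOn ℂ (UniformOnFun.toFun _ g) Ω} =>
        UniformOnFun.toFun 𝔖 g.1) (UniformOnFun.toFun 𝔖 f.1) (nhds f) Ω :=
    (tendstoLocallyUniformlyOn_iff_forall_isCompact hΩo).2 fun K hK hKc => h0 K ⟨hK, hKc⟩
  have main : ∀ m : ℕ, TendstoLocallyUniformlyOn
      (fun g : {g : UniformOnFun ℂ ℂ 𝔖 // DifferentiableOn ℂ (UniformOnFun.toFun _ g) Ω} =>
        deriv^[m] (UniformOnFun.toFun 𝔖 g.1)) (deriv^[m] (UniformOnFun.toFun 𝔖 f.1))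
      (nhds f) Ω := by
    intro m
    induction m with
    | zero => simpa using hlu
    | succ m ih =>
      have h := ih.deriv (Eventually.of_forall fun g => iter_deriv_diffOn hΩo g.2 m) hΩo
      have he : (deriv ∘ fun g : {g : UniformOnFun ℂ ℂ 𝔖 //
          DifferentiableOn ℂ (UniformOnFun.toFun _ g) Ω} =>
          deriv^[m] (UniformOnFun.toFun 𝔖 g.1)) = fun g =>
          deriv^[m+1] (UniformOnFun.toFun 𝔖 g.1) := by
        funext g; simp [Function.iterate_succ_apply']
      rw [he, ← Function.iterate_succ_apply' deriv m (UniformOnFun.toFun 𝔖 f.1)] at h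
      exact h
  exact (main n).tendsto_at hz

/-- In the space `H(Ω)` of holomorphic functions on a domain `Ω ≠ ℂ` with
the topology of uniform convergence on compact subsets, the set of `f` whose Taylor
series at a fixed `z ∈ Ω` has radius of convergence at most `d = |z - z₀|`
(`z₀` a boundary point) is a Gδ set. -/
theorem stmt2 (Ω : Set ℂ) (hΩo : IsOpen Ω) (hΩc : IsConnected Ω) (hΩne : Ω ≠ Set.univ)
    (z₀ : ℂ) (hz₀ : z₀ ∈ frontier Ω) (z : ℂ) (hz : z ∈ Ω) :
    IsGδ {f : {g : UniformOnFun ℂ ℂ {K : Set ℂ | K ⊆ Ω ∧ IsCompact K} //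
        DifferentiableOn ℂ (UniformOnFun.toFun _ g) Ω} |
      ∀ p : FormalMultilinearSeries ℂ ℂ ℂ,
        HasFPowerSeriesAt (UniformOnFun.toFun _ f.1) p z →
          p.radius ≤ ENNReal.ofReal (dist z z₀)} := by
  set 𝔖 : Set (Set ℂ) := {K : Set ℂ | K ⊆ Ω ∧ IsCompact K} with h𝔖
  set X := {g : UniformOnFun ℂ ℂ 𝔖 // DifferentiableOn ℂ (UniformOnFun.toFun _ g) Ω} with hX
  set d := dist z z₀ with hd
  have hseteq : {f : X | ∀ p : FormalMultilinearSeries ℂ ℂ ℂ,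
        HasFPowerSeriesAt (UniformOnFun.toFun _ f.1) p z →
          p.radius ≤ ENNReal.ofReal d} =
      ⋂ (q : ℚ), ⋂ (C : ℕ), {f : X | d < (q : ℝ) → ∃ n : ℕ,
        (C : ℝ) * n.factorial < ‖deriv^[n] (UniformOnFun.toFun 𝔖 f.1) z‖ * (q : ℝ) ^ n} := by
    ext f
    simp only [mem_setOf_eq, mem_iInter]
    constructor
    · intro hf q C hq
      obtain ⟨p, hp⟩ := f.2.analyticAt (hΩo.mem_nhds hz)
      have hrad := hf p hp
      by_contra hcon
      push_neg at hcon
      have hq0 : (0 : ℝ) < (q : ℝ) := lt_of_le_of_lt dist_nonneg hq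
      have hb : ∀ n : ℕ, ‖p n‖ * ((Real.toNNReal (q : ℝ) : ℝ≥0) : ℝ) ^ n ≤ C := by
        intro n
        rw [Real.coe_toNNReal _ hq0.le]
        have h1 := hcon n
        rw [← bridge hp n] at h1
        have hfac : (0 : ℝ) < (n.factorial : ℝ) := by positivity
        have h2 : (n.factorial : ℝ) * (‖p n‖ * (q : ℝ) ^ n) ≤ (n.factorial : ℝ) * C := by
          calc (n.factorial : ℝ) * (‖p n‖ * (q : ℝ) ^ n)
              = ((n.factorial : ℝ) * ‖p n‖) * (q : ℝ) ^ n := by ring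
            _ ≤ (C : ℝ) * n.factorial := h1
            _ = (n.factorial : ℝ) * C := by ring
        exact le_of_mul_le_mul_left h2 hfac
      have hle := p.le_radius_of_bound C hb
      have hlt : ENNReal.ofReal d < (Real.toNNReal (q : ℝ) : ℝ≥0∞) := by
        have : ENNReal.ofReal d < ENNReal.ofReal (q : ℝ) :=
          (ENNReal.ofReal_lt_ofReal_iff hq0).2 hq
        simpa [ENNReal.ofReal] using this
      exact absurd (hle.trans hrad) hlt.not_ge
    · intro hf p hp
      by_contra hcon
      push_neg at hcon
      obtain ⟨q, hq0, hq1, hq2⟩ := ENNReal.lt_iff_exists_rat_btwn.1 hcon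
      obtain ⟨C, hC0, hCb⟩ := p.norm_mul_pow_le_of_lt_radius hq2
      obtain ⟨m, hm⟩ := exists_nat_ge C
      have hq0' : (0 : ℝ) ≤ (q : ℝ) := by exact_mod_cast hq0
      have hdq : d < (q : ℝ) := by
        rw [show ((Real.toNNReal (q : ℝ) : ℝ≥0) : ℝ≥0∞) = ENNReal.ofReal (q : ℝ) from rfl] at hq1
        exact (ENNReal.ofReal_lt_ofReal_iff_of_nonneg dist_nonneg).1 hq1
      obtain ⟨n, hn⟩ := hf q m hdq
      have hb := hCb n
      rw [Real.coe_toNNReal _ hq0'] at hb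
      have hfac : (0 : ℝ) ≤ (n.factorial : ℝ) := by positivity
      have h2 : ‖deriv^[n] (UniformOnFun.toFun 𝔖 f.1) z‖ * (q : ℝ) ^ n ≤
          (m : ℝ) * n.factorial := by
        calc ‖deriv^[n] (UniformOnFun.toFun 𝔖 f.1) z‖ * (q : ℝ) ^ n
            = (n.factorial : ℝ) * (‖p n‖ * (q : ℝ) ^ n) := by rw [← bridge hp n]; ring
          _ ≤ (n.factorial : ℝ) * C := mul_le_mul_of_nonneg_left hb hfac
          _ ≤ (n.factorial : ℝ) * m := mul_le_mul_of_nonneg_left hm hfac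
          _ = (m : ℝ) * n.factorial := by ring
      exact absurd (lt_of_lt_of_le hn h2) (lt_irrefl _)
  rw [hseteq]
  refine IsGδ.iInter fun q => IsGδ.iInter fun C => ?_
  by_cases hq : d < (q : ℝ)
  · have : {f : X | d < (q : ℝ) → ∃ n : ℕ,
        (C : ℝ) * n.factorial < ‖deriv^[n] (UniformOnFun.toFun 𝔖 f.1) z‖ * (q : ℝ) ^ n} =
        ⋃ n : ℕ, {f : X |
          (C : ℝ) * n.factorial < ‖deriv^[n] (UniformOnFun.toFun 𝔖 f.1) z‖ * (q : ℝ) ^ n} := by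
      ext f; simp [hq]
    rw [this]
    refine (isOpen_iUnion fun n => ?_).isGδ
    have hcont : Continuous (fun f : X =>
        ‖deriv^[n] (UniformOnFun.toFun 𝔖 f.1) z‖ * (q : ℝ) ^ n) :=
      ((cont_iter hΩo hz n).norm.mul continuous_const)
    exact isOpen_lt continuous_const hcont
  · have : {f : X | d < (q : ℝ) → ∃ n : ℕ,
        (C : ℝ) * n.factorial < ‖deriv^[n] (UniformOnFun.toFun 𝔖 f.1) z‖ * (q : ℝ) ^ n} =
        univ := by
      ext f; simp [hq]
    rw [this]
    exact IsGδ.univ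
end

section
/- Let f : D → ℂ be holomorphic and bounded on the open unit disk D, continuous on D ∪ I for an open arc I ⊆ T of the unit circle, and suppose f vanishes identically on I. Then f vanishes identically on D. -/
open Complex Metric Set Topology Filter Pointwise

theorem prod_eqOn_zero {ι : Type*} (s : Finset ι) (F : ι → ℂ → ℂ)
    (hF : ∀ i ∈ s, DifferentiableOn ℂ (F i) (ball (0:ℂ) 1))
    (h : Set.EqOn (fun z => ∏ i ∈ s, F i z) 0 (ball (0:ℂ) 1)) :
    ∃ i ∈ s, Set.EqOn (F i) 0 (ball (0:ℂ) 1) := by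
  classical
  induction s using Finset.induction_on with
  | empty =>
      exfalso
      have h0 := h (mem_ball_self one_pos)
      simp at h0
  | @insert a s ha ih =>
      have hA : AnalyticOnNhd ℂ (F a) (ball (0:ℂ) 1) :=
        (hF a (Finset.mem_insert_self a s)).analyticOnNhd isOpen_ball
      have hR : DifferentiableOn ℂ (fun z => ∏ i ∈ s, F i z) (ball (0:ℂ) 1) :=
        DifferentiableOn.fun_finsetProd (fun i hi => hF i (Finset.mem_insert_of_mem hi))
      have hpre : IsPreconnected (ball (0:ℂ) 1) := (convex_ball (0:ℂ) 1).isPreconnected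
      have h0mem : (0:ℂ) ∈ ball (0:ℂ) 1 := mem_ball_self one_pos
      rcases (hA 0 h0mem).eventually_eq_zero_or_eventually_ne_zero with h1 | h1
      · exact ⟨a, Finset.mem_insert_self a s,
          hA.eqOn_zero_of_preconnected_of_eventuallyEq_zero hpre h0mem h1⟩
      · have hball : ball (0:ℂ) 1 ∈ 𝓝 (0:ℂ) := isOpen_ball.mem_nhds h0mem
        have hev : ∀ᶠ z in 𝓝[≠] (0:ℂ), (∏ i ∈ s, F i z) = 0 := by
          filter_upwards [h1, eventually_nhdsWithin_of_eventually_nhds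
            (eventually_of_mem hball (fun z hz => h hz))] with z hz1 hz2
          have : F a z * ∏ i ∈ s, F i z = 0 := by
            simpa [Finset.prod_insert ha] using hz2
          exact (mul_eq_zero.1 this).resolve_left hz1
        have hEq : Set.EqOn (fun z => ∏ i ∈ s, F i z) 0 (ball (0:ℂ) 1) :=
          (hR.analyticOnNhd isOpen_ball).eqOn_zero_of_preconnected_of_frequently_eq_zero
            hpre h0mem hev.frequently
        obtain ⟨i, hi, hEi⟩ := ih (fun i hi => hF i (Finset.mem_insert_of_mem hi)) hEq
        exact ⟨i, Finset.mem_insert_of_mem hi, hEi⟩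

/-- A bounded holomorphic function on the open unit disk, continuous up to
a nonempty open arc `I` of the unit circle and vanishing on `I`, vanishes identically
on the disk. -/
theorem stmt4 (f : ℂ → ℂ) (I : Set ℂ)
    (hIsub : I ⊆ sphere (0 : ℂ) 1) (hIne : I.Nonempty)
    (hIopen : ∃ U : Set ℂ, IsOpen U ∧ I = U ∩ sphere (0 : ℂ) 1)
    (hf : DifferentiableOn ℂ f (ball (0 : ℂ) 1))
    (hbd : ∃ M : ℝ, ∀ z ∈ ball (0 : ℂ) 1, ‖f z‖ ≤ M)
    (hcont : ContinuousOn f (ball (0 : ℂ) 1 ∪ I))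
    (hvanish : Set.EqOn f 0 I) :
    Set.EqOn f 0 (ball (0 : ℂ) 1) := by
  classical
  obtain ⟨U, hUopen, hIU⟩ := hIopen
  obtain ⟨ζ0, hζ0⟩ := hIne
  obtain ⟨M0, hM0⟩ := hbd
  set M : ℝ := max M0 0 with hMdef
  have hM : ∀ z ∈ ball (0:ℂ) 1, ‖f z‖ ≤ M := fun z hz => (hM0 z hz).trans (le_max_left _ _)
  have hMnn : 0 ≤ M := le_max_right _ _
  have hζ0n : ‖ζ0‖ = 1 := mem_sphere_zero_iff_norm.1 (hIsub hζ0)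
  have hζ0ne : ζ0 ≠ 0 := fun h => by simp [h] at hζ0n
  -- unit-norm facts
  have hc1 : ∀ c : sphere (0:ℂ) 1, ‖(c:ℂ)‖ = 1 := fun c => mem_sphere_zero_iff_norm.1 c.2
  have hcne : ∀ c : sphere (0:ℂ) 1, (c:ℂ) ≠ 0 := fun c h => by
    have := hc1 c; rw [h] at this; simp at this
  have hnorm : ∀ (c : sphere (0:ℂ) 1) (z : ℂ), ‖(c:ℂ)⁻¹ * z‖ = ‖z‖ := by
    intro c z
    rw [norm_mul, norm_inv, hc1 c, inv_one, one_mul]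
  -- finite subcover by rotated copies of U
  have hcover : sphere (0:ℂ) 1 ⊆ ⋃ c : sphere (0:ℂ) 1, (c : ℂ) • U := by
    intro ζ hζ
    have hζn : ‖ζ‖ = 1 := mem_sphere_zero_iff_norm.1 hζ
    have hcn : ‖ζ * ζ0⁻¹‖ = 1 := by
      rw [norm_mul, norm_inv, hζn, hζ0n, inv_one, one_mul]
    refine mem_iUnion.2 ⟨⟨ζ * ζ0⁻¹, mem_sphere_zero_iff_norm.2 hcn⟩, ?_⟩
    refine ⟨ζ0, (hIU ▸ hζ0).1, ?_⟩
    simp only [smul_eq_mul]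
    field_simp
  obtain ⟨t, ht⟩ := (isCompact_sphere (0:ℂ) 1).elim_finite_subcover
      (fun c : sphere (0:ℂ) 1 => (c : ℂ) • U)
      (fun c => hUopen.smul₀ (hcne c)) hcover
  set F : sphere (0:ℂ) 1 → ℂ → ℂ := fun c z => f ((c:ℂ)⁻¹ * z) with hFdef
  have hmaps : ∀ c : sphere (0:ℂ) 1,
      MapsTo (fun z => (c:ℂ)⁻¹ * z) (ball (0:ℂ) 1) (ball (0:ℂ) 1) := by
    intro c z hz
    rw [mem_ball_zero_iff, hnorm c z]
    exact mem_ball_zero_iff.1 hz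
  have hFdiff : ∀ c : sphere (0:ℂ) 1, DifferentiableOn ℂ (F c) (ball (0:ℂ) 1) :=
    fun c => hf.comp ((differentiable_id.const_mul _).differentiableOn) (hmaps c)
  have hFbd : ∀ c : sphere (0:ℂ) 1, ∀ z ∈ ball (0:ℂ) 1, ‖F c z‖ ≤ M :=
    fun c z hz => hM _ (hmaps c hz)
  set g : ℂ → ℂ := fun z => ∏ c ∈ t, F c z with hgdef
  set G : ℂ → ℂ := fun z => if z ∈ ball (0:ℂ) 1 then g z else 0 with hGdef
  have hgdiff : DifferentiableOn ℂ g (ball (0:ℂ) 1) :=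
    DifferentiableOn.fun_finsetProd (fun c _ => hFdiff c)
  have hGg : Set.EqOn G g (ball (0:ℂ) 1) := fun z hz => if_pos hz
  have hGdiff : DifferentiableOn ℂ G (ball (0:ℂ) 1) := hgdiff.congr hGg
  -- continuity of G on the closed ball
  have hGcont : ContinuousOn G (closedBall (0:ℂ) 1) := by
    intro ζ hζ
    rcases lt_or_eq_of_le (mem_closedBall_zero_iff.1 hζ) with hlt | heq
    · -- interior point
      have hb : ζ ∈ ball (0:ℂ) 1 := mem_ball_zero_iff.2 hlt
      have hgat : ContinuousAt g ζ :=
        (hgdiff.differentiableAt (isOpen_ball.mem_nhds hb)).continuousAt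
      have hev : G =ᶠ[𝓝 ζ] g := eventually_of_mem (isOpen_ball.mem_nhds hb) hGg
      exact (hgat.congr hev.symm).continuousWithinAt
    · -- boundary point
      have hζs : ζ ∈ sphere (0:ℂ) 1 := mem_sphere_zero_iff_norm.2 heq
      obtain ⟨c, hct, hcU⟩ := mem_iUnion₂.1 (ht hζs)
      obtain ⟨w, hwU, hwζ⟩ := hcU
      have hwdef : (c:ℂ)⁻¹ * ζ = w := by
        simp only [smul_eq_mul] at hwζ
        rw [← hwζ, inv_mul_cancel_left₀ (hcne c)]
      have hwS : (c:ℂ)⁻¹ * ζ ∈ sphere (0:ℂ) 1 :=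
        mem_sphere_zero_iff_norm.2 (by rw [hnorm c ζ, heq])
      have hwI : (c:ℂ)⁻¹ * ζ ∈ I := by
        rw [hIU]; exact ⟨hwdef ▸ hwU, hwS⟩
      have hGζ : G ζ = 0 := if_neg (by
        rw [mem_ball_zero_iff, heq]; exact lt_irrefl 1)
      rw [ContinuousWithinAt, hGζ]
      have hfc : Tendsto f (𝓝[ball (0:ℂ) 1 ∪ I] ((c:ℂ)⁻¹ * ζ)) (𝓝 0) := by
        have h1 := hcont _ (Or.inr hwI)
        rw [ContinuousWithinAt] at h1
        have h2 : f ((c:ℂ)⁻¹ * ζ) = 0 := hvanish hwI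
        rwa [h2] at h1
      have hm : Tendsto (fun z => (c:ℂ)⁻¹ * z) (𝓝[closedBall (0:ℂ) 1] ζ)
          (𝓝[ball (0:ℂ) 1 ∪ I] ((c:ℂ)⁻¹ * ζ)) := by
        rw [tendsto_nhdsWithin_iff]
        constructor
        · exact ((continuous_const.mul continuous_id).tendsto ζ).mono_left nhdsWithin_le_nhds
        · have hU' : ∀ᶠ z in 𝓝 ζ, (c:ℂ)⁻¹ * z ∈ U :=
            (continuous_const.mul continuous_id).continuousAt.eventually_mem
              (hUopen.mem_nhds (hwdef ▸ hwU : (c:ℂ)⁻¹ * ζ ∈ U))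
          filter_upwards [eventually_nhdsWithin_of_eventually_nhds hU',
            self_mem_nhdsWithin] with z hzU hzB
          rcases lt_or_eq_of_le (mem_closedBall_zero_iff.1 hzB) with h1 | h1
          · exact Or.inl (mem_ball_zero_iff.2 (by rw [hnorm c z]; exact h1))
          · exact Or.inr (by
              rw [hIU]
              exact ⟨hzU, mem_sphere_zero_iff_norm.2 (by rw [hnorm c z, h1])⟩)
      have htend : Tendsto (fun z => f ((c:ℂ)⁻¹ * z)) (𝓝[closedBall (0:ℂ) 1] ζ) (𝓝 0) :=
        hfc.comp hm
      have hBtend : Tendsto (fun z => M ^ (t.card - 1) * ‖f ((c:ℂ)⁻¹ * z)‖)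
          (𝓝[closedBall (0:ℂ) 1] ζ) (𝓝 0) := by
        simpa using (htend.norm.const_mul (M ^ (t.card - 1)))
      refine squeeze_zero_norm' ?_ hBtend
      filter_upwards [self_mem_nhdsWithin] with z hz
      by_cases hzb : z ∈ ball (0:ℂ) 1
      · have hGz : G z = g z := if_pos hzb
        rw [hGz]
        have hsplit : ∏ c' ∈ t, ‖F c' z‖ = ‖F c z‖ * ∏ c' ∈ t.erase c, ‖F c' z‖ :=
          (Finset.mul_prod_erase t _ hct).symm
        have hprodle : ∏ c' ∈ t.erase c, ‖F c' z‖ ≤ M ^ (t.card - 1) := by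
          calc ∏ c' ∈ t.erase c, ‖F c' z‖ ≤ ∏ _c' ∈ t.erase c, M :=
                Finset.prod_le_prod (fun i _ => norm_nonneg _)
                  (fun i hi => hFbd i z hzb)
            _ = M ^ (t.erase c).card := Finset.prod_const M
            _ = M ^ (t.card - 1) := by rw [Finset.card_erase_of_mem hct]
        calc ‖g z‖ = ∏ c' ∈ t, ‖F c' z‖ := by rw [hgdef]; exact norm_prod t _
          _ = ‖F c z‖ * ∏ c' ∈ t.erase c, ‖F c' z‖ := hsplit
          _ ≤ ‖F c z‖ * M ^ (t.card - 1) :=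
              mul_le_mul_of_nonneg_left hprodle (norm_nonneg _)
          _ = M ^ (t.card - 1) * ‖f ((c:ℂ)⁻¹ * z)‖ := mul_comm _ _
      · have hGz : G z = 0 := if_neg hzb
        rw [hGz, norm_zero]
        positivity
  have hDCC : DiffContOnCl ℂ G (ball (0:ℂ) 1) :=
    ⟨hGdiff, by rwa [closure_ball (0:ℂ) one_ne_zero]⟩
  have hmax : ∀ z ∈ closure (ball (0:ℂ) 1), ‖G z‖ ≤ 0 := by
    intro z hz
    refine Complex.norm_le_of_forall_mem_frontier_norm_le isBounded_ball hDCC ?_ hz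
    intro w hw
    rw [frontier_ball (0:ℂ) one_ne_zero] at hw
    have hwnb : w ∉ ball (0:ℂ) 1 := by
      rw [mem_ball_zero_iff, mem_sphere_zero_iff_norm.1 hw]
      exact lt_irrefl 1
    have : G w = 0 := if_neg hwnb
    rw [this, norm_zero]
  have hg0 : Set.EqOn g 0 (ball (0:ℂ) 1) := by
    intro z hz
    have h1 := hmax z (subset_closure hz)
    rw [← hGg hz]
    exact norm_le_zero_iff.1 h1
  obtain ⟨c, hct, hFc⟩ := prod_eqOn_zero t F (fun c _ => hFdiff c) hg0
  intro z hz
  have hcz : (c:ℂ) * z ∈ ball (0:ℂ) 1 := by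
    rw [mem_ball_zero_iff, norm_mul, hc1 c, one_mul]
    exact mem_ball_zero_iff.1 hz
  have h1 := hFc hcz
  simp only [hFdef] at h1
  rw [inv_mul_cancel_left₀ (hcne c)] at h1
  exact h1
end

section
/- Let γ : [0, 2π] → ℂ be an analytic Jordan curve and L = γ([0, 2π]) its image. If Ω ⊆ ℂ is open and f : Ω → ℂ is continuous on Ω and holomorphic on Ω \ L, then f is holomorphic on Ω. -/
open Complex Metric Set intervalIntegral MeasureTheory
open scoped Interval

private lemma abs_sub_uIcc {x s₁ s₂ t : ℝ} (hx : x ∈ Set.uIcc s₁ s₂) :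
    |x - t| ≤ max |s₁ - t| |s₂ - t| := by
  rcases Set.mem_uIcc.mp hx with ⟨h1, h2⟩ | ⟨h1, h2⟩ <;>
    refine abs_sub_le_iff.mpr ⟨?_, ?_⟩
  · exact le_max_of_le_right (by linarith [le_abs_self (s₂ - t)])
  · exact le_max_of_le_left (by linarith [neg_abs_le (s₁ - t)])
  · exact le_max_of_le_left (by linarith [le_abs_self (s₁ - t)])
  · exact le_max_of_le_right (by linarith [neg_abs_le (s₂ - t)])

private lemma rect_mem_ball {c₀ : ℂ} {ρ : ℝ} {a b c d x y : ℝ}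
    (hx : x ∈ Set.uIcc a b) (hy : y ∈ Set.uIcc c d)
    (h : ∀ u ∈ ({a, b} : Set ℝ), ∀ v ∈ ({c, d} : Set ℝ), ((u:ℂ) + v*I) ∈ ball c₀ ρ) :
    ((x:ℂ) + y*I) ∈ ball c₀ ρ := by
  obtain ⟨u, hu, hxu⟩ : ∃ u ∈ ({a, b} : Set ℝ), |x - c₀.re| ≤ |u - c₀.re| := by
    rcases le_max_iff.mp (abs_sub_uIcc (t := c₀.re) hx) with h' | h'
    exacts [⟨a, by simp, h'⟩, ⟨b, by simp, h'⟩]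
  obtain ⟨v, hv, hyv⟩ : ∃ v ∈ ({c, d} : Set ℝ), |y - c₀.im| ≤ |v - c₀.im| := by
    rcases le_max_iff.mp (abs_sub_uIcc (t := c₀.im) hy) with h' | h'
    exacts [⟨c, by simp, h'⟩, ⟨d, by simp, h'⟩]
  have hcor := h u hu v hv
  rw [mem_ball, Complex.dist_eq_re_im] at hcor ⊢
  simp only [Complex.add_re, Complex.ofReal_re, Complex.mul_re, Complex.I_re, Complex.I_im,
    Complex.ofReal_im, Complex.add_im, Complex.mul_im] at hcor ⊢
  refine lt_of_le_of_lt ?_ hcor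
  apply Real.sqrt_le_sqrt
  have h1 : (x - c₀.re)^2 ≤ (u - c₀.re)^2 := by
    nlinarith [abs_nonneg (x - c₀.re), abs_nonneg (u - c₀.re), _root_.sq_abs (x - c₀.re), _root_.sq_abs (u - c₀.re), hxu]
  have h2 : (y - c₀.im)^2 ≤ (v - c₀.im)^2 := by
    nlinarith [abs_nonneg (y - c₀.im), abs_nonneg (v - c₀.im), _root_.sq_abs (y - c₀.im), _root_.sq_abs (v - c₀.im), hyv]
  ring_nf
  ring_nf at h1 h2
  linarith

private lemma rect_zero (f : ℂ → ℂ) (a b c d : ℝ)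
    (Hc : ContinuousOn f ([[a, b]] ×ℂ [[c, d]]))
    (Hd : ∀ x ∈ Ioo (min a b) (max a b) ×ℂ Ioo (min c d) (max c d), DifferentiableAt ℂ f x) :
    (∫ x : ℝ in a..b, f (x + c*I)) - (∫ x : ℝ in a..b, f (x + d*I)) +
      I • (∫ y : ℝ in c..d, f (b + y*I)) - I • (∫ y : ℝ in c..d, f (a + y*I)) = 0 := by
  have := Complex.integral_boundary_rect_eq_zero_of_differentiable_on_off_countable f
    (a + c*I) (b + d*I) ∅ countable_empty (by simpa using Hc)
    (fun x hx => Hd x (by simpa using hx.1))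
  simpa using this

private lemma Ioo_min_max_subset_uIcc (u v : ℝ) : Ioo (min u v) (max u v) ⊆ [[u, v]] := by
  rw [← Set.Icc_min_max]; exact Set.Ioo_subset_Icc_self

private lemma RI_zero (f : ℂ → ℂ) (a b c d : ℝ)
    (Hc : ContinuousOn f ([[a, b]] ×ℂ [[c, d]]))
    (Hd : ∀ x ∈ ([[a, b]] ×ℂ [[c, d]]), x.re ≠ 0 → DifferentiableAt ℂ f x) :
    (∫ x : ℝ in a..b, f (x + c*I)) - (∫ x : ℝ in a..b, f (x + d*I)) +
      I • (∫ y : ℝ in c..d, f (b + y*I)) - I • (∫ y : ℝ in c..d, f (a + y*I)) = 0 := by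
  by_cases h0 : (0:ℝ) ∈ Ioo (min a b) (max a b)
  · have h0m : (0:ℝ) ∈ [[a, b]] := Ioo_min_max_subset_uIcc a b h0
    have hsub : ∀ {u v : ℝ}, u ∈ [[a, b]] → v ∈ [[a, b]] →
        ([[u, v]] ×ℂ [[c, d]]) ⊆ ([[a, b]] ×ℂ [[c, d]]) := by
      intro u v hu hv p hp
      rw [Complex.mem_reProdIm] at hp ⊢
      exact ⟨Set.uIcc_subset_uIcc hu hv hp.1, hp.2⟩
    have key : ∀ u v : ℝ, u ∈ [[a, b]] → v ∈ [[a, b]] → ((0:ℝ) ∈ ({u, v} : Set ℝ)) →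
        (∫ x : ℝ in u..v, f (x + c*I)) - (∫ x : ℝ in u..v, f (x + d*I)) +
          I • (∫ y : ℝ in c..d, f (v + y*I)) - I • (∫ y : ℝ in c..d, f (u + y*I)) = 0 := by
      intro u v hu hv h0uv
      refine rect_zero f u v c d (Hc.mono (hsub hu hv)) (fun x hx => ?_)
      rw [Complex.mem_reProdIm] at hx
      refine Hd x (hsub hu hv ?_) ?_
      · rw [Complex.mem_reProdIm]
        exact ⟨Ioo_min_max_subset_uIcc u v hx.1, Ioo_min_max_subset_uIcc c d hx.2⟩
      · intro hre
        rcases hx.1 with ⟨h1, h2⟩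
        rw [hre] at h1 h2
        rcases h0uv with rfl | rfl <;>
          rcases min_lt_iff.mp h1 with h | h <;> rcases lt_max_iff.mp h2 with h' | h' <;> linarith
    have E1 := key a 0 (Set.left_mem_uIcc) h0m (by simp)
    have E2 := key 0 b h0m (Set.right_mem_uIcc) (by simp)
    have hcont : ∀ v : ℝ, v ∈ [[c, d]] → ContinuousOn (fun x : ℝ => f ((x:ℂ) + v*I)) [[a, b]] := by
      intro v hv
      refine Hc.comp (by fun_prop) (fun x hx => ?_)
      rw [Complex.mem_reProdIm]
      simp only [Complex.add_re, Complex.ofReal_re, Complex.mul_re, Complex.I_re, Complex.I_im,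
        Complex.ofReal_im, Complex.add_im, Complex.mul_im]
      constructor
      · simpa using hx
      · simpa using hv
    have hIc1 : IntervalIntegrable (fun x : ℝ => f ((x:ℂ) + c*I)) volume a 0 :=
      ((hcont c Set.left_mem_uIcc).mono (Set.uIcc_subset_uIcc Set.left_mem_uIcc h0m)).intervalIntegrable
    have hIc2 : IntervalIntegrable (fun x : ℝ => f ((x:ℂ) + c*I)) volume 0 b :=
      ((hcont c Set.left_mem_uIcc).mono (Set.uIcc_subset_uIcc h0m Set.right_mem_uIcc)).intervalIntegrable
    have hId1 : IntervalIntegrable (fun x : ℝ => f ((x:ℂ) + d*I)) volume a 0 :=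
      ((hcont d Set.right_mem_uIcc).mono (Set.uIcc_subset_uIcc Set.left_mem_uIcc h0m)).intervalIntegrable
    have hId2 : IntervalIntegrable (fun x : ℝ => f ((x:ℂ) + d*I)) volume 0 b :=
      ((hcont d Set.right_mem_uIcc).mono (Set.uIcc_subset_uIcc h0m Set.right_mem_uIcc)).intervalIntegrable
    have S1 := intervalIntegral.integral_add_adjacent_intervals hIc1 hIc2
    have S2 := intervalIntegral.integral_add_adjacent_intervals hId1 hId2
    simp only [smul_eq_mul] at E1 E2 ⊢
    push_cast at E1 E2 S1 S2 ⊢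
    linear_combination E1 + E2 - S1 + S2
  · refine rect_zero f a b c d Hc (fun x hx => ?_)
    rw [Complex.mem_reProdIm] at hx
    refine Hd x ?_ (fun hre => h0 (hre ▸ hx.1))
    rw [Complex.mem_reProdIm]
    exact ⟨Ioo_min_max_subset_uIcc a b hx.1, Ioo_min_max_subset_uIcc c d hx.2⟩

private lemma dist_re_le (p q : ℂ) : dist p.re q.re ≤ dist p q := by
  rw [Complex.dist_eq, Real.dist_eq]
  simpa using Complex.abs_re_le_norm (p - q)

private lemma dist_im_le (p q : ℂ) : dist p.im q.im ≤ dist p q := by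
  rw [Complex.dist_eq, Real.dist_eq]
  simpa using Complex.abs_im_le_norm (p - q)

private lemma moreraLine {f : ℂ → ℂ} {c₀ : ℂ} {ρ : ℝ}
    (hc : ContinuousOn f (ball c₀ ρ))
    (hd : ∀ z ∈ ball c₀ ρ, z.re ≠ 0 → DifferentiableAt ℂ f z) :
    DifferentiableOn ℂ f (ball c₀ ρ) := by
  rcases le_or_gt ρ 0 with hρ | hρ
  · rw [ball_eq_empty.mpr hρ]; exact differentiableOn_empty
  have hrect : ∀ a b c d : ℝ,
      (∀ u ∈ ({a, b} : Set ℝ), ∀ v ∈ ({c, d} : Set ℝ), ((u:ℂ) + v*I) ∈ ball c₀ ρ) →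
      ([[a, b]] ×ℂ [[c, d]]) ⊆ ball c₀ ρ := by
    intro a b c d h p hp
    rw [Complex.mem_reProdIm] at hp
    have := rect_mem_ball hp.1 hp.2 h
    rwa [Complex.re_add_im] at this
  have hHint : ∀ a b v : ℝ,
      (∀ u ∈ ({a, b} : Set ℝ), ((u:ℂ) + v*I) ∈ ball c₀ ρ) →
      IntervalIntegrable (fun x : ℝ => f ((x:ℂ) + v*I)) volume a b := by
    intro a b v h
    apply ContinuousOn.intervalIntegrable
    refine hc.comp (by fun_prop) (fun x hx => ?_)
    refine rect_mem_ball (c := v) (d := v) hx Set.left_mem_uIcc (fun u hu v' hv' => ?_)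
    simp only [Set.mem_insert_iff, Set.mem_singleton_iff] at hu hv'
    rcases hv' with rfl | rfl <;> rcases hu with rfl | rfl <;> exact h u (by simp)
  have hVint : ∀ u c d : ℝ,
      (∀ v ∈ ({c, d} : Set ℝ), ((u:ℂ) + v*I) ∈ ball c₀ ρ) →
      IntervalIntegrable (fun y : ℝ => f ((u:ℂ) + y*I)) volume c d := by
    intro u c d h
    apply ContinuousOn.intervalIntegrable
    refine hc.comp (by fun_prop) (fun y hy => ?_)
    refine rect_mem_ball (a := u) (b := u) Set.left_mem_uIcc hy (fun u' hu' v hv => ?_)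
    simp only [Set.mem_insert_iff, Set.mem_singleton_iff] at hu' hv
    rcases hu' with rfl | rfl <;> rcases hv with rfl | rfl <;> exact h v (by simp)
  set F : ℂ → ℂ := fun z => (∫ x : ℝ in c₀.re..z.re, f (x + c₀.im*I)) +
      I • (∫ y : ℝ in c₀.im..z.im, f (z.re + y*I)) with hF
  have main : ∀ z ∈ ball c₀ ρ, HasDerivAt F (f z) z := by
    intro z hz
    have hdz := mem_ball.mp hz
    set δ : ℝ := (ρ - dist z c₀)/2 with hδdef
    have hδ : 0 < δ := by rw [hδdef]; linarith
    -- corner memberships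
    have m1 : c₀ ∈ ball c₀ ρ := mem_ball_self hρ
    have m2 : ((z.re : ℂ) + c₀.im*I) ∈ ball c₀ ρ := by
      rw [mem_ball, Complex.dist_of_im_eq (by simp)]
      simp only [Complex.add_re, Complex.ofReal_re, Complex.mul_re, Complex.I_re, Complex.I_im,
        Complex.ofReal_im]
      calc dist (z.re + (c₀.im * 0 - 0 * 1)) c₀.re = dist z.re c₀.re := by norm_num
        _ ≤ dist z c₀ := dist_re_le z c₀
        _ < ρ := hdz
    have m4 : ((z.re : ℂ) + z.im*I) ∈ ball c₀ ρ := by rw [Complex.re_add_im]; exact hz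
    have hcorners : ∀ w ∈ ball z δ,
        ((w.re : ℂ) + c₀.im*I) ∈ ball c₀ ρ ∧ ((w.re : ℂ) + z.im*I) ∈ ball c₀ ρ ∧
        ((w.re : ℂ) + w.im*I) ∈ ball c₀ ρ := by
      intro w hw
      have hwz := mem_ball.mp hw
      have hwc : dist w c₀ < δ + dist z c₀ := by
        calc dist w c₀ ≤ dist w z + dist z c₀ := dist_triangle _ _ _
          _ < δ + dist z c₀ := by linarith
      have m6 : ((w.re : ℂ) + w.im*I) ∈ ball c₀ ρ := by
        rw [Complex.re_add_im, mem_ball]; rw [hδdef] at hwc; linarith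
      refine ⟨?_, ?_, m6⟩
      · rw [mem_ball, Complex.dist_of_im_eq (by simp)]
        have : dist ((w.re : ℂ) + c₀.im*I).re c₀.re = dist w.re c₀.re := by norm_num
        rw [this]
        calc dist w.re c₀.re ≤ dist w c₀ := dist_re_le w c₀
          _ < ρ := by rw [hδdef] at hwc; linarith
      · rw [mem_ball]
        calc dist ((w.re : ℂ) + z.im*I) c₀ ≤ dist ((w.re : ℂ) + z.im*I) w + dist w c₀ :=
            dist_triangle _ _ _
          _ < ρ := by
            have h1 : dist ((w.re : ℂ) + z.im*I) w = dist z.im w.im := by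
              rw [Complex.dist_of_re_eq (by simp)]; norm_num
            have h2 : dist z.im w.im ≤ dist z w := dist_im_le z w
            rw [h1, hδdef] at *
            rw [dist_comm z w] at h2
            linarith
    -- key identity
    have hkey : ∀ w ∈ ball z δ, F w - F z =
        (∫ x : ℝ in z.re..w.re, f (x + z.im*I)) +
          I • (∫ y : ℝ in z.im..w.im, f (w.re + y*I)) := by
      intro w hw
      obtain ⟨m3, m5, m6⟩ := hcorners w hw
      have hcor1 : ∀ u ∈ ({z.re, w.re} : Set ℝ), ∀ v ∈ ({c₀.im, z.im} : Set ℝ),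
          ((u:ℂ) + v*I) ∈ ball c₀ ρ := by
        rintro u hu v hv
        simp only [Set.mem_insert_iff, Set.mem_singleton_iff] at hu hv
        rcases hu with rfl | rfl <;> rcases hv with rfl | rfl
        exacts [m2, m4, m3, m5]
      have R0 := RI_zero f z.re w.re c₀.im z.im (hc.mono (hrect _ _ _ _ hcor1))
        (fun x hx hxre => hd x (hrect _ _ _ _ hcor1 hx) hxre)
      have S1 := intervalIntegral.integral_add_adjacent_intervals
        (hHint c₀.re z.re c₀.im (by
          rintro u hu
          simp only [Set.mem_insert_iff, Set.mem_singleton_iff] at hu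
          rcases hu with rfl | rfl
          · simpa using m1
          · exact m2))
        (hHint z.re w.re c₀.im (by
          rintro u hu
          simp only [Set.mem_insert_iff, Set.mem_singleton_iff] at hu
          rcases hu with rfl | rfl
          exacts [m2, m3]))
      have S2 := intervalIntegral.integral_add_adjacent_intervals
        (hVint w.re c₀.im z.im (by
          rintro v hv
          simp only [Set.mem_insert_iff, Set.mem_singleton_iff] at hv
          rcases hv with rfl | rfl
          exacts [m3, m5]))
        (hVint w.re z.im w.im (by
          rintro v hv
          simp only [Set.mem_insert_iff, Set.mem_singleton_iff] at hv
          rcases hv with rfl | rfl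
          exacts [m5, m6]))
      simp only [hF, smul_eq_mul] at R0 S1 S2 ⊢
      linear_combination R0 - S1 - I * S2
    rw [hasDerivAt_iff_isLittleO, Asymptotics.isLittleO_iff]
    intro c hc0
    have hca : ContinuousAt f z := hc.continuousAt (isOpen_ball.mem_nhds hz)
    obtain ⟨δ₁, hδ₁, hδ₁'⟩ := Metric.continuousAt_iff.mp hca (c/2) (by linarith)
    have hmem : ball z (min δ (δ₁/2)) ∈ nhds z :=
      isOpen_ball.mem_nhds (mem_ball_self (lt_min hδ (by linarith)))
    filter_upwards [hmem] with w hw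
    have hwδ : w ∈ ball z δ := mem_ball.mpr (lt_of_lt_of_le (mem_ball.mp hw) (min_le_left _ _))
    have hdzw : dist w z < δ₁/2 := lt_of_lt_of_le (mem_ball.mp hw) (min_le_right _ _)
    obtain ⟨m3, m5, m6⟩ := hcorners w hwδ
    have hIh : IntervalIntegrable (fun x : ℝ => f ((x:ℂ) + z.im*I)) volume z.re w.re := by
      refine hHint _ _ _ ?_
      rintro u hu
      simp only [Set.mem_insert_iff, Set.mem_singleton_iff] at hu
      rcases hu with rfl | rfl
      exacts [m4, m5]
    have hIv : IntervalIntegrable (fun y : ℝ => f ((w.re:ℂ) + y*I)) volume z.im w.im := by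
      refine hVint _ _ _ ?_
      rintro v hv
      simp only [Set.mem_insert_iff, Set.mem_singleton_iff] at hv
      rcases hv with rfl | rfl
      exacts [m5, m6]
    have hsplit : F w - F z - (w - z) • f z =
        (∫ x : ℝ in z.re..w.re, (f (x + z.im*I) - f z)) +
          I • (∫ y : ℝ in z.im..w.im, (f (w.re + y*I) - f z)) := by
      rw [hkey w hwδ, intervalIntegral.integral_sub hIh intervalIntegrable_const,
        intervalIntegral.integral_sub hIv intervalIntegrable_const,
        intervalIntegral.integral_const, intervalIntegral.integral_const]
      have hw_z : (w - z) = ((w.re - z.re : ℝ) : ℂ) + ((w.im - z.im : ℝ) : ℂ) * I := by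
        simp [Complex.ext_iff]
      rw [hw_z]
      simp only [smul_eq_mul, Complex.real_smul]
      push_cast
      ring
    rw [hsplit]
    have hb1 : ‖∫ x : ℝ in z.re..w.re, (f (x + z.im*I) - f z)‖ ≤ (c/2) * |w.re - z.re| := by
      refine intervalIntegral.norm_integral_le_of_norm_le_const (fun x hx => ?_)
      have hx' : x ∈ [[z.re, w.re]] := Set.uIoc_subset_uIcc hx
      have h1 : |x - z.re| ≤ |w.re - z.re| := by
        have := abs_sub_uIcc (t := z.re) hx'
        simpa using this
      have hdist : dist ((x:ℂ) + z.im*I) z < δ₁ := by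
        rw [Complex.dist_of_im_eq (by simp)]
        have : dist ((x:ℂ) + z.im*I).re z.re = dist x z.re := by norm_num
        rw [this, Real.dist_eq]
        have h2 : |w.re - z.re| = dist w.re z.re := (Real.dist_eq _ _).symm
        have h3 : dist w.re z.re ≤ dist w z := dist_re_le w z
        linarith
      have := hδ₁' hdist
      rw [dist_eq_norm] at this
      exact this.le
    have hb2 : ‖∫ y : ℝ in z.im..w.im, (f (w.re + y*I) - f z)‖ ≤ (c/2) * |w.im - z.im| := by
      refine intervalIntegral.norm_integral_le_of_norm_le_const (fun y hy => ?_)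
      have hy' : y ∈ [[z.im, w.im]] := Set.uIoc_subset_uIcc hy
      have h1 : |y - w.im| ≤ |z.im - w.im| := by
        have := abs_sub_uIcc (t := w.im) hy'
        simpa using this
      have hdist : dist ((w.re:ℂ) + y*I) z < δ₁ := by
        calc dist ((w.re:ℂ) + y*I) z ≤ dist ((w.re:ℂ) + y*I) w + dist w z := dist_triangle _ _ _
          _ < δ₁ := by
            have hh : dist ((w.re:ℂ) + y*I) w = dist y w.im := by
              rw [Complex.dist_of_re_eq (by simp)]; norm_num
            have h3 : |z.im - w.im| ≤ dist z w := by
              rw [← Real.dist_eq]; exact dist_im_le z w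
            rw [hh, Real.dist_eq, dist_comm z w] at *
            linarith
      have := hδ₁' hdist
      rw [dist_eq_norm] at this
      exact this.le
    have hre_norm : |w.re - z.re| ≤ ‖w - z‖ := by
      rw [← dist_eq_norm, ← Real.dist_eq]; exact dist_re_le w z
    have him_norm : |w.im - z.im| ≤ ‖w - z‖ := by
      rw [← dist_eq_norm, ← Real.dist_eq]; exact dist_im_le w z
    calc ‖(∫ x : ℝ in z.re..w.re, (f (x + z.im*I) - f z)) +
          I • (∫ y : ℝ in z.im..w.im, (f (w.re + y*I) - f z))‖
        ≤ ‖∫ x : ℝ in z.re..w.re, (f (x + z.im*I) - f z)‖ +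
            ‖I • (∫ y : ℝ in z.im..w.im, (f (w.re + y*I) - f z))‖ := norm_add_le _ _
      _ = ‖∫ x : ℝ in z.re..w.re, (f (x + z.im*I) - f z)‖ +
            ‖∫ y : ℝ in z.im..w.im, (f (w.re + y*I) - f z)‖ := by
          rw [norm_smul]; simp
      _ ≤ (c/2) * |w.re - z.re| + (c/2) * |w.im - z.im| := add_le_add hb1 hb2
      _ ≤ (c/2) * ‖w - z‖ + (c/2) * ‖w - z‖ := by
          gcongr <;> linarith
      _ = c * ‖w - z‖ := by ring
  have hFd : DifferentiableOn ℂ F (ball c₀ ρ) :=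
    fun z hz => (main z hz).differentiableAt.differentiableWithinAt
  have hFan : AnalyticOnNhd ℂ F (ball c₀ ρ) := hFd.analyticOnNhd isOpen_ball
  exact hFan.deriv.differentiableOn.congr (fun z hz => ((main z hz).deriv).symm)

/-- If `L` is the trace of an analytic Jordan curve
(`γ t = Φ (e^{it})` with `Φ` injective and holomorphic on an annulus `r < |z| < R`,
`0 < r < 1 < R`), `Ω` is open and `f : Ω → ℂ` is continuous on `Ω` and holomorphic on
`Ω \ L`, then `f` is holomorphic on `Ω`. -/
theorem stmt6 (γ : ℝ → ℂ) (Φ : ℂ → ℂ) (r R : ℝ)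
    (hr : 0 < r) (hr1 : r < 1) (hR : 1 < R)
    (hΦdiff : DifferentiableOn ℂ Φ {z : ℂ | r < ‖z‖ ∧ ‖z‖ < R})
    (hΦinj : Set.InjOn Φ {z : ℂ | r < ‖z‖ ∧ ‖z‖ < R})
    (hγ : ∀ t : ℝ, γ t = Φ (Complex.exp (t * Complex.I)))
    (L : Set ℂ) (hL : L = γ '' Set.Icc 0 (2 * Real.pi))
    (Ω : Set ℂ) (hΩ : IsOpen Ω) (f : ℂ → ℂ)
    (hcont : ContinuousOn f Ω) (hf : DifferentiableOn ℂ f (Ω \ L)) :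
    DifferentiableOn ℂ f Ω := by
  set A : Set ℂ := {z : ℂ | r < ‖z‖ ∧ ‖z‖ < R} with hA
  have hAopen : IsOpen A := by
    have : A = (fun z : ℂ => ‖z‖) ⁻¹' (Ioo r R) := by
      ext z; simp [hA, Set.mem_Ioo]
    rw [this]
    exact isOpen_Ioo.preimage continuous_norm
  have hΦcont : ContinuousOn Φ A := hΦdiff.continuousOn
  have hsphereA : sphere (0:ℂ) 1 ⊆ A := by
    intro z hz
    have : ‖z‖ = 1 := by simpa using hz
    exact ⟨by rw [this]; exact hr1, by rw [this]; exact hR⟩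
  -- L is the image of the unit circle
  have hLeq : L = Φ '' sphere (0:ℂ) 1 := by
    rw [hL]
    ext p
    constructor
    · rintro ⟨t, _, rfl⟩
      exact ⟨Complex.exp (t * I), by simp [Complex.norm_exp], (hγ t).symm⟩
    · rintro ⟨u, hu, rfl⟩
      have hu1 : ‖u‖ = 1 := by simpa using hu
      have hexp : Complex.exp ((Complex.arg u : ℂ) * I) = u := by
        have := Complex.norm_mul_exp_arg_mul_I u
        rw [hu1] at this; simpa using this
      rcases le_or_gt 0 (Complex.arg u) with h | h
      · refine ⟨Complex.arg u, ⟨h, ?_⟩, ?_⟩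
        · linarith [Complex.arg_le_pi u, Real.pi_pos]
        · rw [hγ, hexp]
      · refine ⟨Complex.arg u + 2 * Real.pi, ⟨by linarith [Complex.neg_pi_lt_arg u, Real.pi_pos], by linarith [Real.pi_pos]⟩, ?_⟩
        rw [hγ]
        have : ((Complex.arg u + 2 * Real.pi : ℝ) : ℂ) * I = (Complex.arg u : ℂ) * I + 2 * Real.pi * I := by
          push_cast; ring
        rw [this, Complex.exp_add, Complex.exp_two_pi_mul_I, mul_one, hexp]
  have hLcomp : IsCompact L := by
    rw [hLeq]
    exact (isCompact_sphere 0 1).image_of_continuousOn (hΦcont.mono hsphereA)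
  have hLclosed : IsClosed L := hLcomp.isClosed
  have hΩLopen : IsOpen (Ω \ L) := hΩ.sdiff hLclosed
  -- analyticity of Φ
  have hΦan : AnalyticOnNhd ℂ Φ A := hΦdiff.analyticOnNhd hAopen
  -- bad set
  set Z : Set ℂ := {z | z ∈ sphere (0:ℂ) 1 ∧ deriv Φ z = 0} with hZ
  have hZfin : Z.Finite := by
    by_contra hinf
    have hinf' : Z.Infinite := hinf
    obtain ⟨z₁, hz₁, hacc⟩ := hinf'.exists_accPt_of_subset_isCompact (isCompact_sphere 0 1)
      (fun z hz => hz.1)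
    have hfreq : ∃ᶠ u in nhdsWithin z₁ {z₁}ᶜ, deriv Φ u = 0 := by
      rw [accPt_iff_frequently] at hacc
      rw [frequently_nhdsWithin_iff]
      exact hacc.mono (fun y hy => ⟨hy.2.2, hy.1⟩)
    obtain ⟨ε, hε, hball⟩ := Metric.isOpen_iff.mp hAopen z₁ (hsphereA hz₁)
    have h0 : EqOn (deriv Φ) 0 (ball z₁ ε) :=
      ((hΦan.deriv).mono hball).eqOn_zero_of_preconnected_of_frequently_eq_zero
        (convex_ball z₁ ε).isPreconnected (mem_ball_self hε) hfreq
    have hconst : Φ (z₁ + ε/2) = Φ z₁ := by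
      apply (convex_ball z₁ ε).is_const_of_fderivWithin_eq_zero (hΦdiff.mono hball)
      · intro z hz
        rw [fderivWithin_of_isOpen isOpen_ball hz]
        ext
        simp [← toSpanSingleton_deriv, h0 hz]
      · rw [mem_ball]
        simp only [dist_self_add_left]
        simp [abs_of_pos hε]
        linarith
      · exact mem_ball_self hε
    have := hΦinj (hball (by
      rw [mem_ball]
      simp only [dist_self_add_left]
      simp [abs_of_pos hε]
      linarith)) (hball (mem_ball_self hε)) hconst
    have h5 : ((ε : ℂ)/2) = 0 := by linear_combination this
    have h6 : (ε/2 : ℝ) = 0 := by exact_mod_cast h5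
    linarith
  have key : ∀ w ∈ Ω, w ∉ Φ '' Z → DifferentiableAt ℂ f w := by
    intro w hw hwE
    by_cases hwL : w ∈ L
    · rw [hLeq] at hwL
      obtain ⟨z0, hz0S, rfl⟩ := hwL
      have hz0A : z0 ∈ A := hsphereA hz0S
      have hz0n : ‖z0‖ = 1 := by simpa using hz0S
      have hdΦ : deriv Φ z0 ≠ 0 := fun h => hwE ⟨z0, ⟨hz0S, h⟩, rfl⟩
      obtain ⟨p, hp⟩ := hΦan z0 hz0A
      have hstrict0 := hp.hasStrictDerivAt
      have hstrict : HasStrictDerivAt Φ (deriv Φ z0) z0 := by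
        rwa [← hstrict0.hasDerivAt.deriv] at hstrict0
      have hV₀open : IsOpen (A ∩ Φ ⁻¹' Ω) := hΦcont.isOpen_inter_preimage hAopen hΩ
      have hz0V₀ : z0 ∈ A ∩ Φ ⁻¹' Ω := ⟨hz0A, hw⟩
      have hgc : ContinuousOn (f ∘ Φ) (A ∩ Φ ⁻¹' Ω) :=
        hcont.comp (hΦcont.mono inter_subset_left) (fun z hz => hz.2)
      have hgd : ∀ z ∈ A ∩ Φ ⁻¹' Ω, ‖z‖ ≠ 1 → DifferentiableAt ℂ (f ∘ Φ) z := by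
        intro z hz hn1
        have hΦznL : Φ z ∉ L := by
          rw [hLeq]
          rintro ⟨u, huS, hu⟩
          exact hn1 (by rw [hΦinj hz.1 (hsphereA huS) hu.symm]; simpa using huS)
        have h1 : DifferentiableAt ℂ f (Φ z) :=
          hf.differentiableAt (hΩLopen.mem_nhds ⟨hz.2, hΦznL⟩)
        have h2 : DifferentiableAt ℂ Φ z := hΦdiff.differentiableAt (hAopen.mem_nhds hz.1)
        exact h1.comp z h2
      set ξ0 : ℂ := Complex.log z0 with hξ0
      have hz0ne : z0 ≠ 0 := by intro h; rw [h] at hz0n; simp at hz0n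
      have hexpξ0 : Complex.exp ξ0 = z0 := Complex.exp_log hz0ne
      have hWopen : IsOpen (Complex.exp ⁻¹' (A ∩ Φ ⁻¹' Ω)) :=
        hV₀open.preimage Complex.continuous_exp
      have hξ0W : ξ0 ∈ Complex.exp ⁻¹' (A ∩ Φ ⁻¹' Ω) := by
        rw [Set.mem_preimage, hexpξ0]; exact hz0V₀
      obtain ⟨ρ0, hρ0, hballW⟩ := Metric.isOpen_iff.mp hWopen ξ0 hξ0W
      have hh : DifferentiableOn ℂ ((f ∘ Φ) ∘ Complex.exp) (ball ξ0 ρ0) := by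
        apply moreraLine
        · exact hgc.comp Complex.continuous_exp.continuousOn (fun ξ hξ => hballW hξ)
        · intro ξ hξ hre
          have hmem := hballW hξ
          have hne : ‖Complex.exp ξ‖ ≠ 1 := by
            rw [Complex.norm_exp]
            intro h
            exact hre (by rwa [Real.exp_eq_one_iff ξ.re] at h)
          exact (hgd _ hmem hne).comp ξ (Complex.differentiable_exp ξ)
      have hgdiff : DifferentiableAt ℂ (f ∘ Φ) z0 := by
        set ℓ : ℂ → ℂ := fun u => Complex.log (u / z0) + ξ0 with hℓ
        have hℓz0 : ℓ z0 = ξ0 := by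
          simp [hℓ, div_self hz0ne, Complex.log_one]
        have hone : (1:ℂ) ∈ Complex.slitPlane := by
          rw [Complex.mem_slitPlane_iff]; simp
        have hℓdiff : DifferentiableAt ℂ ℓ z0 := by
          have h1 : DifferentiableAt ℂ (fun u : ℂ => u / z0) z0 :=
            differentiableAt_id.div_const z0
          have h2 : DifferentiableAt ℂ (fun u : ℂ => Complex.log (u / z0)) z0 :=
            h1.clog (by rw [div_self hz0ne]; exact hone)
          exact h2.add_const ξ0
        have hexpev : ∀ᶠ u in nhds z0, Complex.exp (ℓ u) = u := by
          have hne' : {(0:ℂ)}ᶜ ∈ nhds z0 := isOpen_compl_singleton.mem_nhds hz0ne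
          filter_upwards [hne'] with u hu
          have hu0 : u ≠ 0 := hu
          simp only [hℓ]
          rw [Complex.exp_add, Complex.exp_log (div_ne_zero hu0 hz0ne), hexpξ0]
          field_simp
        have hℓmem : ball ξ0 ρ0 ∈ nhds (ℓ z0) := by
          rw [hℓz0]; exact isOpen_ball.mem_nhds (mem_ball_self hρ0)
        have heq : (f ∘ Φ) =ᶠ[nhds z0] (((f ∘ Φ) ∘ Complex.exp) ∘ ℓ) := by
          filter_upwards [hexpev] with u hu
          simp [Function.comp, hu]
        rw [Filter.EventuallyEq.differentiableAt_iff heq]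
        have hhd : DifferentiableAt ℂ ((f ∘ Φ) ∘ Complex.exp) (ℓ z0) := by
          rw [hℓz0]
          exact hh.differentiableAt (isOpen_ball.mem_nhds (mem_ball_self hρ0))
        exact hhd.comp z0 hℓdiff
      set d := deriv Φ z0 with hdd
      set ψ := hstrict.localInverse Φ d z0 hdΦ with hψ
      have hψim : ψ (Φ z0) = z0 :=
        (hstrict.hasStrictFDerivAt_equiv hdΦ).localInverse_apply_image
      have hψd : HasStrictDerivAt ψ d⁻¹ (Φ z0) := hstrict.to_localInverse hdΦ
      have hev : ∀ᶠ u in nhds (Φ z0), Φ (ψ u) = u :=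
        (hstrict.hasStrictFDerivAt_equiv hdΦ).eventually_right_inverse
      have heq2 : f =ᶠ[nhds (Φ z0)] ((f ∘ Φ) ∘ ψ) := by
        filter_upwards [hev] with u hu
        simp [Function.comp, hu]
      rw [Filter.EventuallyEq.differentiableAt_iff heq2]
      have hg2 : DifferentiableAt ℂ (f ∘ Φ) (ψ (Φ z0)) := by rw [hψim]; exact hgdiff
      exact hg2.comp (Φ z0) hψd.hasDerivAt.differentiableAt
    · exact hf.differentiableAt (hΩLopen.mem_nhds ⟨hw, hwL⟩)
  intro w hw
  by_cases hwE : w ∈ Φ '' Z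
  · have hEfin : (Φ '' Z).Finite := hZfin.image Φ
    have hclosed : IsClosed ((Φ '' Z) \ {w}) := (hEfin.subset diff_subset).isClosed
    have hwo : w ∈ ((Φ '' Z) \ {w})ᶜ ∩ Ω := ⟨fun h => h.2 rfl, hw⟩
    obtain ⟨δ, hδ, hball⟩ := Metric.isOpen_iff.mp
      ((isOpen_compl_iff.mpr hclosed).inter hΩ) w hwo
    have hdiff : DifferentiableOn ℂ f (ball w δ \ {w}) := by
      intro u hu
      refine (key u (hball hu.1).2 ?_).differentiableWithinAt
      intro huE
      exact (hball hu.1).1 ⟨huE, hu.2⟩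
    have hca : ContinuousAt f w := hcont.continuousAt (hΩ.mem_nhds hw)
    have hdb := (Complex.differentiableOn_compl_singleton_and_continuousAt_iff
      (isOpen_ball.mem_nhds (mem_ball_self hδ))).mp ⟨hdiff, hca⟩
    exact (hdb.differentiableAt (isOpen_ball.mem_nhds (mem_ball_self hδ))).differentiableWithinAt
  · exact (key w hw hwE).differentiableWithinAt
end

section
/- Let f : T → ℂ and t₀ ∈ ℝ. Then f agrees with a convergent real power series Σ a_n (t - t₀)^n in e^{it} for t near t₀ if and only if there exists an open set V ⊆ ℂ containing e^{it₀} and a holomorphic function F : V → ℂ with F = f on V ∩ T. -/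
set_option maxHeartbeats 1000000 in
open Complex Metric Set ENNReal NNReal in
/-- A function `f` on the unit circle is real analytic at `e^{it₀}`
(it agrees near `t₀` with a convergent power series in `t - t₀`) iff it is extendable
at `e^{it₀}` (it agrees with a holomorphic function on an open neighbourhood `V` of
`e^{it₀}` on `V ∩ T`). -/
theorem stmt14 (f : ℂ → ℂ) (t₀ : ℝ) :
    (∃ a : ℕ → ℂ, ∃ δ > (0 : ℝ), ∀ t : ℝ, |t - t₀| < δ →
        HasSum (fun n : ℕ => a n * ((t : ℂ) - (t₀ : ℂ)) ^ n)
          (f (Complex.exp (t * Complex.I)))) ↔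
      (∃ V : Set ℂ, IsOpen V ∧ Complex.exp (t₀ * Complex.I) ∈ V ∧
        ∃ F : ℂ → ℂ, DifferentiableOn ℂ F V ∧
          Set.EqOn F f (V ∩ sphere (0 : ℂ) 1)) := by
  constructor
  · rintro ⟨a, δ, hδ, ha⟩
    set p : FormalMultilinearSeries ℂ ℂ ℂ := FormalMultilinearSeries.ofScalars ℂ a with hpdef
    set ρ : ℝ := δ / 2 with hρdef
    have hρ0 : 0 < ρ := by positivity
    have hρδ : ρ < δ := by simp [hρdef]; linarith
    -- radius bound
    have hrad : (Real.toNNReal ρ : ℝ≥0∞) ≤ p.radius := by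
      apply p.le_radius_of_summable_norm
      have hs : Summable fun n => a n * ((↑(t₀ + ρ) : ℂ) - (t₀ : ℂ)) ^ n :=
        (ha (t₀ + ρ) (by rw [add_sub_cancel_left, abs_of_pos hρ0]; exact hρδ)).summable
      rw [← summable_norm_iff] at hs
      convert hs using 2 with n
      rw [FormalMultilinearSeries.ofScalars_norm, norm_mul, norm_pow]
      congr 1
      rw [show (↑(t₀ + ρ) : ℂ) - (t₀ : ℂ) = ((ρ : ℝ) : ℂ) by push_cast; ring, Complex.norm_real,
        Real.norm_eq_abs, abs_of_pos hρ0, Real.coe_toNNReal _ hρ0.le]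
    have hrad0 : 0 < p.radius :=
      lt_of_lt_of_le (by simpa using hρ0) hrad
    -- membership in the convergence ball
    have hmem : ∀ z : ℂ, ‖z‖ < ρ → z ∈ Metric.eball (0 : ℂ) p.radius := by
      intro z hz
      rw [Metric.mem_eball, edist_zero_right, enorm_eq_nnnorm]
      refine lt_of_lt_of_le ?_ hrad
      rw [← ENNReal.coe_lt_coe.symm]
      · exact_mod_cast (by rw [Real.coe_toNNReal _ hρ0.le]; exact_mod_cast hz :
          (‖z‖₊ : ℝ) < (Real.toNNReal ρ : ℝ))
    -- the sum function g
    set g : ℂ → ℂ := fun z => p.sum (z - t₀) with hgdef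
    have hgd : DifferentiableOn ℂ g (ball (t₀ : ℂ) ρ) := by
      have h1 : DifferentiableOn ℂ p.sum (EMetric.ball (0 : ℂ) p.radius) :=
        (p.hasFPowerSeriesOnBall hrad0).differentiableOn
      exact h1.comp ((differentiable_id.sub_const _).differentiableOn)
        (fun z hz => hmem _ (by simpa [Complex.dist_eq] using hz))
    -- g agrees with f ∘ exp on real points
    have hgf : ∀ t : ℝ, |t - t₀| < ρ → g ((t : ℂ)) = f (Complex.exp (t * Complex.I)) := by
      intro t ht
      have h1 : HasSum (fun n : ℕ => a n * ((t : ℂ) - (t₀ : ℂ)) ^ n)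
          (f (Complex.exp (t * Complex.I))) := ha t (ht.trans hρδ)
      have hn : ‖(t : ℂ) - (t₀ : ℂ)‖ < ρ := by
        rw [show (t : ℂ) - (t₀ : ℂ) = ((t - t₀ : ℝ) : ℂ) by push_cast; ring, Complex.norm_real,
          Real.norm_eq_abs]
        exact ht
      have h2 : HasSum (fun n : ℕ => p n fun _ => ((t : ℂ) - (t₀ : ℂ)))
          (p.sum ((t : ℂ) - (t₀ : ℂ))) := p.hasSum (hmem _ hn)
      have h3 : (fun n : ℕ => p n fun _ => ((t : ℂ) - (t₀ : ℂ)))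
          = fun n : ℕ => a n * ((t : ℂ) - (t₀ : ℂ)) ^ n := by
        funext n
        rw [hpdef, FormalMultilinearSeries.ofScalars_apply_eq, smul_eq_mul]
      rw [h3] at h2
      exact h2.unique h1
    -- the chart h
    set h : ℂ → ℂ := fun z => (t₀ : ℂ) - Complex.I * Complex.log (z * Complex.exp (-((t₀ : ℂ) * Complex.I))) with hhdef
    set U : Set ℂ := {z : ℂ | z * Complex.exp (-((t₀ : ℂ) * Complex.I)) ∈ Complex.slitPlane} with hUdef
    have hUopen : IsOpen U :=
      Complex.isOpen_slitPlane.preimage (by fun_prop)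
    have hhd : DifferentiableOn ℂ h U := by
      intro z hz
      apply DifferentiableAt.differentiableWithinAt
      apply (differentiableAt_const _).sub
      apply (differentiableAt_const _).mul
      exact (Complex.differentiableAt_log hz).comp (f := fun z => z * Complex.exp (-((t₀ : ℂ) * Complex.I))) z (by fun_prop)
    have hhc : ContinuousOn h U := hhd.continuousOn
    set V : Set ℂ := U ∩ h ⁻¹' (ball ((t₀ : ℂ)) ρ) with hVdef
    have hVopen : IsOpen V := hhc.isOpen_inter_preimage hUopen isOpen_ball
    have hinv : Complex.exp ((t₀ : ℂ) * Complex.I) * Complex.exp (-((t₀ : ℂ) * Complex.I)) = 1 := by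
      rw [← Complex.exp_add]; simp
    have hz₀U : Complex.exp ((t₀ : ℂ) * Complex.I) ∈ U := by
      have h1 : Complex.exp ((t₀ : ℂ) * Complex.I) * Complex.exp (-((t₀ : ℂ) * Complex.I))
          ∈ Complex.slitPlane := by
        rw [hinv]; exact Complex.one_mem_slitPlane
      exact h1
    have hhz₀ : h (Complex.exp ((t₀ : ℂ) * Complex.I)) = (t₀ : ℂ) := by
      simp only [hhdef]
      rw [hinv, Complex.log_one, mul_zero, sub_zero]
    have hz₀V : Complex.exp ((t₀ : ℂ) * Complex.I) ∈ V := by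
      refine ⟨hz₀U, ?_⟩
      have h2 : h (Complex.exp ((t₀ : ℂ) * Complex.I)) ∈ ball ((t₀ : ℂ)) ρ := by
        rw [hhz₀]; exact mem_ball_self hρ0
      exact h2
    refine ⟨V, hVopen, hz₀V, g ∘ h, ?_, ?_⟩
    · exact hgd.comp (hhd.mono inter_subset_left) (fun z hz => hz.2)
    · rintro z ⟨⟨hzU, hzb⟩, hzs⟩
      set w : ℂ := z * Complex.exp (-((t₀ : ℂ) * Complex.I)) with hwdef
      have habsz : ‖z‖ = 1 := by
        simpa [Complex.dist_eq] using hzs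
      have habsw : ‖w‖ = 1 := by
        rw [hwdef, norm_mul, habsz, one_mul, show -((t₀ : ℂ) * Complex.I) = ((-t₀ : ℝ) : ℂ) * Complex.I by push_cast; ring,
          Complex.norm_exp_ofReal_mul_I]
      set s : ℝ := Complex.arg w with hsdef
      have hlogw : Complex.log w = (s : ℂ) * Complex.I := by
        rw [Complex.log, habsw, Real.log_one, Complex.ofReal_zero, zero_add, hsdef]
      have hhz : h z = (t₀ : ℂ) + (s : ℂ) := by
        rw [hhdef]
        simp only
        rw [← hwdef, hlogw]
        ring_nf
        rw [Complex.I_sq]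
        ring
      have hsρ : |s| < ρ := by
        have := hzb
        rw [mem_preimage, mem_ball, Complex.dist_eq, hhz] at this
        simpa using this
      have hzeq : Complex.exp ((↑(t₀ + s) : ℂ) * Complex.I) = z := by
        have hw : Complex.exp ((s : ℂ) * Complex.I) = w := by
          rw [← hlogw, Complex.exp_log (by rw [← norm_ne_zero_iff, habsw]; exact one_ne_zero)]
        push_cast
        rw [add_mul, Complex.exp_add, hw, hwdef]
        rw [mul_comm z _, ← mul_assoc, hinv, one_mul]
      have : (g ∘ h) z = g ((↑(t₀ + s) : ℂ)) := by
        rw [Function.comp_apply, hhz]; push_cast; ring_nf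
      rw [this, hgf (t₀ + s) (by rw [add_sub_cancel_left]; exact hsρ), hzeq]

  · rintro ⟨V, hV, hz₀, F, hF, hFf⟩
    have hFa : AnalyticAt ℂ F (Complex.exp (t₀ * Complex.I)) :=
      hF.analyticAt (hV.mem_nhds hz₀)
    have hGa : AnalyticAt ℂ (fun z : ℂ => F (Complex.exp (z * Complex.I))) (t₀ : ℂ) := by
      have h1 : AnalyticAt ℂ (fun z : ℂ => Complex.exp (z * Complex.I)) (t₀ : ℂ) :=
        analyticAt_cexp.comp ((analyticAt_id).mul analyticAt_const)
      exact AnalyticAt.comp (f := fun z : ℂ => Complex.exp (z * Complex.I)) hFa h1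
    obtain ⟨p, r, hp⟩ := hGa
    obtain ⟨r', hr'0, hr'r⟩ := ENNReal.lt_iff_exists_nnreal_btwn.mp hp.r_pos
    -- δ₂ from continuity
    have hcont : Continuous fun t : ℝ => Complex.exp (t * Complex.I) := by fun_prop
    have hopen : IsOpen ((fun t : ℝ => Complex.exp (t * Complex.I)) ⁻¹' V) := hV.preimage hcont
    obtain ⟨δ₂, hδ₂0, hδ₂⟩ := Metric.isOpen_iff.mp hopen t₀ hz₀
    refine ⟨fun n => p.coeff n, min r' δ₂, lt_min (by exact_mod_cast hr'0) hδ₂0, fun t ht => ?_⟩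
    have htr : |t - t₀| < r' := lt_of_lt_of_le ht (min_le_left _ _)
    have htδ : |t - t₀| < δ₂ := lt_of_lt_of_le ht (min_le_right _ _)
    have hnn : ‖(t : ℂ) - (t₀ : ℂ)‖₊ < r' := by
      rw [← NNReal.coe_lt_coe, coe_nnnorm]
      calc ‖(t : ℂ) - (t₀ : ℂ)‖ = |t - t₀| := by
            rw [show (t : ℂ) - (t₀ : ℂ) = ((t - t₀ : ℝ) : ℂ) by push_cast; ring,
              Complex.norm_real, Real.norm_eq_abs]
        _ < r' := htr
    have hmem : ((t : ℂ) - t₀) ∈ Metric.eball (0 : ℂ) r := by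
      rw [Metric.mem_eball, edist_zero_right]
      exact lt_trans (by exact_mod_cast hnn) hr'r
    have hsum := hp.hasSum hmem
    have heq : (t₀ : ℂ) + ((t : ℂ) - t₀) = (t : ℂ) := by ring
    rw [heq] at hsum
    have hVmem : Complex.exp (t * Complex.I) ∈ V := hδ₂ (by simpa [Real.dist_eq] using htδ)
    have hsph : Complex.exp (t * Complex.I) ∈ sphere (0 : ℂ) 1 := by
      simp [Metric.mem_sphere, Complex.dist_eq, Complex.norm_exp_ofReal_mul_I]
    have hfF : F (Complex.exp (t * Complex.I)) = f (Complex.exp (t * Complex.I)) :=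
      hFf ⟨hVmem, hsph⟩
    rw [hfF] at hsum
    have hfun : (fun n => p.coeff n * ((t : ℂ) - t₀) ^ n) = fun n => p n fun _ => (t : ℂ) - t₀ := by
      funext n
      rw [FormalMultilinearSeries.apply_eq_pow_smul_coeff, smul_eq_mul, mul_comm]
    rw [hfun]; exact hsum
end

section
/- Fix t₀ ∈ (0,1), r > 0, and M > 0. The set A of continuous functions f : [0,1] → ℂ for which there exists a holomorphic function F on the disk D(t₀, r) with |F| ≤ M on D(t₀, r) and F = f on D(t₀, r) ∩ [0,1] is a closed subset of C([0,1]) with the uniform norm. -/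
open Complex Metric Set Filter Topology

/-- For fixed `t₀ ∈ (0,1)`, `r > 0`, `M > 0`, the set of continuous
functions `f : [0,1] → ℂ` admitting a holomorphic extension `F` on `D(t₀, r)` with
`|F| ≤ M` and `F = f` on `D(t₀, r) ∩ [0,1]` is closed in `C([0,1])` with the
uniform norm. -/
theorem stmt16 (t₀ r M : ℝ) (ht₀ : t₀ ∈ Set.Ioo (0 : ℝ) 1) (hr : 0 < r) (hM : 0 < M) :
    IsClosed {f : C(Set.Icc (0 : ℝ) 1, ℂ) | ∃ F : ℂ → ℂ,
      DifferentiableOn ℂ F (ball (t₀ : ℂ) r) ∧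
      (∀ z ∈ ball (t₀ : ℂ) r, ‖F z‖ ≤ M) ∧
      ∀ t : Set.Icc (0 : ℝ) 1, ((t : ℝ) : ℂ) ∈ ball (t₀ : ℂ) r →
        F ((t : ℝ) : ℂ) = f t} := by
  set s : Set ℂ := ball (t₀ : ℂ) r with hs
  rw [← isSeqClosed_iff_isClosed]
  intro g f hg hgf
  choose Fn hFd hFb hFeq using hg
  -- a uniform local Lipschitz estimate via the Cauchy estimate
  have key : ∀ G : ℂ → ℂ, DifferentiableOn ℂ G s → (∀ z ∈ s, ‖G z‖ ≤ M) →
      ∀ x ∈ s, ∀ y ∈ ball x ((r - dist x ((t₀ : ℝ) : ℂ)) / 2),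
      ‖G y - G x‖ ≤ (M / ((r - dist x ((t₀ : ℝ) : ℂ)) / 2)) * ‖y - x‖ := by
    intro G hGd hGb x hx y hy
    set δ := (r - dist x ((t₀ : ℝ) : ℂ)) / 2 with hδ
    have hxr : dist x ((t₀ : ℝ) : ℂ) < r := mem_ball.mp hx
    have hδ0 : 0 < δ := by rw [hδ]; linarith
    have hsub : ∀ w ∈ ball x δ, closedBall w δ ⊆ s := by
      intro w hw z hz
      have h1 : dist z w ≤ δ := mem_closedBall.mp hz
      have h2 : dist w x < δ := mem_ball.mp hw
      have : dist z ((t₀ : ℝ) : ℂ) < r := by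
        calc dist z ((t₀ : ℝ) : ℂ) ≤ dist z w + dist w x + dist x ((t₀ : ℝ) : ℂ) :=
              dist_triangle4 z w x _
          _ < δ + δ + dist x ((t₀ : ℝ) : ℂ) := by linarith
          _ = r := by rw [hδ]; ring
      exact mem_ball.mpr this
    have hderiv : ∀ w ∈ ball x δ, ‖deriv G w‖ ≤ M / δ := by
      intro w hw
      refine norm_deriv_le_of_forall_mem_sphere_norm_le hδ0
        (hGd.diffContOnCl_ball (hsub w hw)) fun z hz => ?_
      exact hGb z (hsub w hw (sphere_subset_closedBall hz))
    have hball : ball x δ ⊆ s := fun z hz => hsub x (mem_ball_self hδ0) (ball_subset_closedBall hz)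
    exact (convex_ball x δ).norm_image_sub_le_of_norm_deriv_le
      (fun w hw => (hGd.differentiableAt (isOpen_ball.mem_nhds (hball hw))))
      (fun w hw => hderiv w hw) (mem_ball_self hδ0) hy
  -- pass to an ultrafilter extending atTop and take pointwise limits
  set u : Ultrafilter ℕ := Ultrafilter.of atTop with hu
  have hule : (u : Filter ℕ) ≤ atTop := Ultrafilter.of_le _
  set F : ℂ → ℂ := fun z => limUnder (u : Filter ℕ) fun n => Fn n z with hF
  have htend : ∀ z ∈ s, Tendsto (fun n => Fn n z) (u : Filter ℕ) (𝓝 (F z)) := by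
    intro z hz
    have hle : (u.map fun n => Fn n z : Filter ℂ) ≤ 𝓟 (closedBall 0 M) := by
      rw [le_principal_iff]
      exact Filter.mem_map.mpr (Filter.univ_mem' fun n => by
        simpa [mem_closedBall, dist_eq_norm] using hFb n z hz)
    obtain ⟨a, -, ha⟩ := (isCompact_closedBall (0 : ℂ) M).ultrafilter_le_nhds _ hle
    have ha' : Tendsto (fun n => Fn n z) (u : Filter ℕ) (𝓝 a) := ha
    rw [show F z = a from ha'.limUnder_eq]
    exact ha'
  -- locally uniform convergence along the ultrafilter
  have hlu : TendstoLocallyUniformlyOn (fun n z => Fn n z) F (u : Filter ℕ) s := by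
    rw [Metric.tendstoLocallyUniformlyOn_iff]
    intro ε hε x hx
    set δ := (r - dist x ((t₀ : ℝ) : ℂ)) / 2 with hδ
    have hxr : dist x ((t₀ : ℝ) : ℂ) < r := mem_ball.mp hx
    have hδ0 : 0 < δ := by rw [hδ]; linarith
    have hL0 : 0 < M / δ := div_pos hM hδ0
    set η := min δ (ε / 3 / (M / δ)) with hη
    have hη0 : 0 < η := lt_min hδ0 (div_pos (by linarith) hL0)
    have hballs : ball x η ⊆ s := fun z hz => by
      have : dist z x < η := mem_ball.mp hz
      exact mem_ball.mpr (by
        calc dist z ((t₀ : ℝ) : ℂ) ≤ dist z x + dist x ((t₀ : ℝ) : ℂ) := dist_triangle _ _ _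
          _ < η + dist x ((t₀ : ℝ) : ℂ) := by linarith
          _ ≤ δ + dist x ((t₀ : ℝ) : ℂ) := by have := min_le_left δ (ε / 3 / (M / δ)); linarith
          _ < r := by rw [hδ]; linarith)
    refine ⟨ball x η ∩ s, Filter.inter_mem (mem_nhdsWithin_of_mem_nhds (ball_mem_nhds x hη0)) self_mem_nhdsWithin, ?_⟩
    have hmid : ∀ᶠ n in (u : Filter ℕ), dist (F x) (Fn n x) < ε / 3 :=
      ((htend x hx).eventually (Metric.ball_mem_nhds (F x) (show (0:ℝ) < ε / 3 by linarith))).mono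
        (fun n hn => by rwa [dist_comm] at hn)
    filter_upwards [hmid] with n hn y hy
    obtain ⟨hy1, hy2⟩ := hy
    have hyx : ‖y - x‖ < η := by rw [← dist_eq_norm]; exact mem_ball.mp hy1
    have hyδ : y ∈ ball x δ := mem_ball.mpr (lt_of_lt_of_le (mem_ball.mp hy1) (min_le_left _ _))
    -- Fn n is Lipschitz near x
    have h1 : ‖Fn n y - Fn n x‖ ≤ (M / δ) * ‖y - x‖ := key (Fn n) (hFd n) (hFb n) x hx y hyδ
    -- F is Lipschitz near x, as a limit
    have h2 : ‖F y - F x‖ ≤ (M / δ) * ‖y - x‖ := by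
      refine le_of_tendsto (((htend y hy2).sub (htend x hx)).norm) ?_
      exact Filter.Eventually.of_forall fun m => key (Fn m) (hFd m) (hFb m) x hx y hyδ
    have hsmall : (M / δ) * ‖y - x‖ ≤ ε / 3 := by
      have hηle : η ≤ ε / 3 / (M / δ) := min_le_right _ _
      have : ‖y - x‖ ≤ ε / 3 / (M / δ) := le_trans hyx.le hηle
      calc (M / δ) * ‖y - x‖ ≤ (M / δ) * (ε / 3 / (M / δ)) := by
            exact mul_le_mul_of_nonneg_left this hL0.le
        _ = ε / 3 := by field_simp
    have : dist (F y) (Fn n y) ≤ ‖F y - F x‖ + dist (F x) (Fn n x) + ‖Fn n x - Fn n y‖ := by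
      rw [dist_eq_norm, dist_eq_norm]
      calc ‖F y - Fn n y‖ = ‖(F y - F x) + (F x - Fn n x) + (Fn n x - Fn n y)‖ := by ring_nf
        _ ≤ ‖F y - F x‖ + ‖F x - Fn n x‖ + ‖Fn n x - Fn n y‖ := norm_add₃_le
    have h1' : ‖Fn n x - Fn n y‖ ≤ (M / δ) * ‖y - x‖ := by rwa [norm_sub_rev] at h1
    linarith
  refine ⟨F, ?_, ?_, ?_⟩
  · exact hlu.differentiableOn (Filter.Eventually.of_forall hFd) isOpen_ball
  · intro z hz
    exact le_of_tendsto ((htend z hz).norm) (Filter.Eventually.of_forall fun n => hFb n z hz)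
  · intro t ht
    have h1 : Tendsto (fun n => g n t) atTop (𝓝 (f t)) :=
      ((continuous_eval_const t).tendsto f).comp hgf
    have h2 : Tendsto (fun n => Fn n (((t : ℝ) : ℂ))) (u : Filter ℕ) (𝓝 (f t)) := by
      have : (fun n => Fn n (((t : ℝ) : ℂ))) = fun n => g n t := funext fun n => hFeq n t ht
      rw [this]
      exact h1.mono_left hule
    exact tendsto_nhds_unique (htend _ ht) h2
end

section
/- Fix t₀ ∈ (0,1), r > 0, and M > 0. The set A of continuous functions f : [0,1] → ℂ admitting a holomorphic extension F on D(t₀, r) bounded by M (i.e., F holomorphic on D(t₀, r), |F| ≤ M, F = f on D(t₀, r) ∩ [0,1]) has empty interior in C([0,1]) with the uniform norm. -/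
open Complex Metric Set Filter Topology

/-- For fixed `t₀ ∈ (0,1)`, `r > 0`, `M > 0`, the set of continuous
functions `f : [0,1] → ℂ` admitting a holomorphic extension `F` on `D(t₀, r)` bounded
by `M` (with `F = f` on `D(t₀, r) ∩ [0,1]`) has empty interior in `C([0,1])`. -/
theorem stmt17 (t₀ r M : ℝ) (ht₀ : t₀ ∈ Set.Ioo (0 : ℝ) 1) (hr : 0 < r) (hM : 0 < M) :
    interior {f : C(Set.Icc (0 : ℝ) 1, ℂ) | ∃ F : ℂ → ℂ,
      DifferentiableOn ℂ F (ball (t₀ : ℂ) r) ∧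
      (∀ z ∈ ball (t₀ : ℂ) r, ‖F z‖ ≤ M) ∧
      ∀ t : Set.Icc (0 : ℝ) 1, ((t : ℝ) : ℂ) ∈ ball (t₀ : ℂ) r →
        F ((t : ℝ) : ℂ) = f t} = ∅ := by
  rw [Set.eq_empty_iff_forall_notMem]
  intro f hf
  obtain ⟨ε, hε, hball⟩ := Metric.mem_nhds_iff.1 (mem_interior_iff_mem_nhds.1 hf)
  -- the point z₀ off the real axis
  set z₀ : ℂ := (t₀ : ℂ) + (r / 2) * Complex.I with hz₀
  have hz₀ball : z₀ ∈ ball (t₀ : ℂ) r := by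
    rw [Metric.mem_ball, Complex.dist_eq]
    have h1 : (t₀ : ℂ) + (r / 2) * Complex.I - t₀ = ((r / 2 : ℝ) : ℂ) * Complex.I := by
      push_cast; ring
    rw [hz₀, h1, norm_mul, Complex.norm_I, mul_one, Complex.norm_real, Real.norm_eq_abs,
      abs_of_pos (by positivity : (0:ℝ) < r / 2)]
    linarith
  have hden : ∀ t : ℝ, ((t : ℂ) - z₀) ≠ 0 := by
    intro t h
    have h2 : ((t : ℂ) - z₀).im = 0 := by rw [h]; simp
    simp [hz₀] at h2
    linarith
  have hdenlb : ∀ t : ℝ, r / 2 ≤ ‖(t : ℂ) - z₀‖ := by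
    intro t
    have h1 : |((t : ℂ) - z₀).im| ≤ ‖(t : ℂ) - z₀‖ := Complex.abs_im_le_norm _
    have h2 : ((t : ℂ) - z₀).im = -(r/2) := by simp [hz₀]
    rw [h2, abs_neg, abs_of_pos (by positivity : (0:ℝ) < r/2)] at h1
    simpa using h1
  set c : ℝ := ε * r / 8 with hc
  have hcpos : 0 < c := by positivity
  -- the perturbation
  have hcont : Continuous fun t : Set.Icc (0:ℝ) 1 => (c : ℂ) / (((t : ℝ) : ℂ) - z₀) := by
    apply Continuous.div continuous_const
    · fun_prop
    · intro t; exact hden _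
  set g : C(Set.Icc (0:ℝ) 1, ℂ) := f + ⟨_, hcont⟩ with hg
  have hgball : g ∈ ball f ε := by
    rw [Metric.mem_ball, dist_comm, ContinuousMap.dist_lt_iff hε]
    intro t
    have h3 : f t - g t = -((c : ℂ) / (((t : ℝ) : ℂ) - z₀)) := by simp [hg]
    rw [dist_eq_norm, h3, norm_neg]
    have h4 : ‖(c : ℂ) / (((t : ℝ) : ℂ) - z₀)‖ ≤ c / (r / 2) := by
      rw [norm_div]
      have h5 : ‖(c : ℂ)‖ = c := by
        rw [Complex.norm_real, Real.norm_eq_abs, abs_of_pos hcpos]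
      rw [h5]
      gcongr
      exact hdenlb _
    have h6 : c / (r / 2) = ε / 4 := by rw [hc]; field_simp; ring
    rw [h6] at h4
    linarith
  obtain ⟨F, hF, hFb, hFeq⟩ := interior_subset hf
  obtain ⟨G, hG, hGb, hGeq⟩ := hball hgball
  set K : ℂ → ℂ := fun z => (z - z₀) * (G z - F z) - c with hK
  have hKdiff : DifferentiableOn ℂ K (ball (t₀ : ℂ) r) := by
    apply DifferentiableOn.sub _ (differentiableOn_const _)
    exact ((differentiable_id.sub_const _).differentiableOn).mul (hG.sub hF)
  have hKan : AnalyticOnNhd ℂ K (ball (t₀ : ℂ) r) := hKdiff.analyticOnNhd isOpen_ball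
  -- the sequence of real points approaching t₀
  set δ : ℝ := min (1 - t₀) r / 2 with hδ
  have h1t : (0:ℝ) < 1 - t₀ := by linarith [ht₀.2]
  have hδpos : 0 < δ := by
    have := lt_min h1t hr
    rw [hδ]; linarith
  have hδ1 : δ ≤ (1 - t₀) / 2 := by
    rw [hδ]; gcongr; exact min_le_left _ _
  have hδr : δ ≤ r / 2 := by
    rw [hδ]; gcongr; exact min_le_right _ _
  have hstep : ∀ n : ℕ, 0 < δ / (n + 1) ∧ δ / (n + 1) ≤ δ := by
    intro n
    constructor
    · positivity
    · apply div_le_self hδpos.le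
      have : (0:ℝ) ≤ (n:ℝ) := Nat.cast_nonneg n
      linarith
  have hmemIcc : ∀ n : ℕ, t₀ + δ / (n + 1) ∈ Set.Icc (0:ℝ) 1 := by
    intro n
    obtain ⟨hp, hle⟩ := hstep n
    constructor
    · linarith [ht₀.1]
    · linarith
  have hmemball : ∀ n : ℕ, ((t₀ + δ / (n + 1) : ℝ) : ℂ) ∈ ball (t₀ : ℂ) r := by
    intro n
    obtain ⟨hp, hle⟩ := hstep n
    rw [Metric.mem_ball, Complex.dist_eq]
    have h7 : ((t₀ + δ / (n + 1) : ℝ) : ℂ) - (t₀ : ℂ) = ((δ / (n + 1) : ℝ) : ℂ) := by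
      push_cast; ring
    rw [h7, Complex.norm_real, Real.norm_eq_abs, abs_of_pos hp]
    linarith
  have hKzero : ∀ n : ℕ, K ((t₀ + δ / (n + 1) : ℝ) : ℂ) = 0 := by
    intro n
    set s : ℝ := t₀ + δ / (n + 1) with hs
    have hGs := hGeq ⟨s, hmemIcc n⟩ (hmemball n)
    have hFs := hFeq ⟨s, hmemIcc n⟩ (hmemball n)
    have hgt : g ⟨s, hmemIcc n⟩ = f ⟨s, hmemIcc n⟩ + (c : ℂ) / ((s : ℂ) - z₀) := by
      simp [hg]
    rw [hgt] at hGs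
    simp only [hK]
    rw [hGs, hFs]
    have h8 : ((s : ℂ) - z₀) * ((c : ℂ) / ((s : ℂ) - z₀)) = (c : ℂ) :=
      mul_div_cancel₀ _ (hden s)
    rw [add_sub_cancel_left, h8]  -- hope names ok
    ring
  -- identity theorem
  have htend : Tendsto (fun n : ℕ => ((t₀ + δ / (n + 1) : ℝ) : ℂ)) atTop (𝓝[≠] (t₀ : ℂ)) := by
    apply tendsto_nhdsWithin_of_tendsto_nhds_of_eventually_within
    · have hre : Tendsto (fun n : ℕ => t₀ + δ / (n + 1)) atTop (𝓝 t₀) := by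
        have := tendsto_one_div_add_atTop_nhds_zero_nat.const_mul δ
        have h9 : Tendsto (fun n : ℕ => δ / (n + 1)) atTop (𝓝 0) := by
          simpa [div_eq_mul_inv, mul_comm, one_div] using this
        simpa using tendsto_const_nhds.add h9
      exact (Complex.continuous_ofReal.tendsto t₀).comp hre
    · apply Filter.Eventually.of_forall
      intro n
      simp only [Set.mem_compl_iff, Set.mem_singleton_iff]
      intro h
      have := Complex.ofReal_injective h
      have := (hstep n).1
      linarith
  have hfreq : ∃ᶠ z in 𝓝[≠] (t₀ : ℂ), K z = 0 :=
    htend.frequently (Filter.Frequently.of_forall hKzero)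
  have hEq := hKan.eqOn_zero_of_preconnected_of_frequently_eq_zero
    (convex_ball _ _).isPreconnected (mem_ball_self hr) hfreq
  have h10 := hEq hz₀ball
  simp only [hK, sub_self, zero_mul, Pi.zero_apply, zero_sub, neg_eq_zero,
    Complex.ofReal_eq_zero] at h10
  exact hcpos.ne' h10
end

section
/- The set of continuous functions f : [0,1] → ℂ that are nowhere holomorphically extendable — i.e., there exist no point t₀ ∈ [0,1], radius r > 0, and holomorphic function F : D(t₀, r) → ℂ with F = f on D(t₀, r) ∩ [0,1] — is a dense Gδ subset of C([0,1]) with the uniform norm. -/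
open Complex Metric Set Filter Topology

noncomputable section
namespace Stmt18

/-- Functions admitting a holomorphic extension to `ball q r` bounded by `M`. -/
def Ext (q r M : ℝ) : Set C(Set.Icc (0:ℝ) 1, ℂ) :=
  {f | ∃ F : ℂ → ℂ, DifferentiableOn ℂ F (ball (q:ℂ) r) ∧
        (∀ z ∈ ball (q:ℂ) r, ‖F z‖ ≤ M) ∧
        ∀ t : Set.Icc (0:ℝ) 1, ((t:ℝ):ℂ) ∈ ball (q:ℂ) r → F ((t:ℝ):ℂ) = f t}

lemma key {q r M : ℝ} (hr : 0 < r) (hM : 0 ≤ M) {g : C(Set.Icc (0:ℝ) 1, ℂ)}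
    (hg : g ∈ closure (Ext q r M)) :
    ∃ a : ℕ → ℂ, (∀ j, ‖a j‖ ≤ M / (r/2)^j) ∧
      ∀ t : Set.Icc (0:ℝ) 1, ((t:ℝ):ℂ) ∈ ball (q:ℂ) (r/4) →
        HasSum (fun j => a j * (((t:ℝ):ℂ) - (q:ℂ))^j) (g t) := by
  obtain ⟨x, hxA, hxg⟩ := mem_closure_iff_seq_limit.mp hg
  choose F hFd hFb hFe using hxA
  set R : NNReal := ⟨r/2, by positivity⟩ with hRdef
  have hRr : (R:ℝ) = r/2 := rfl
  have hRpos : 0 < R := by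
    rw [← NNReal.coe_lt_coe, hRr]; positivity
  have hsub : closedBall (q:ℂ) (R:ℝ) ⊆ ball (q:ℂ) r := by
    apply closedBall_subset_ball; rw [hRr]; linarith
  have hps : ∀ k, HasFPowerSeriesOnBall (F k) (cauchyPowerSeries (F k) (q:ℂ) (R:ℝ)) (q:ℂ) R :=
    fun k => ((hFd k).mono hsub).hasFPowerSeriesOnBall hRpos
  set A : ℕ → ℕ → ℂ := fun k j => (cauchyPowerSeries (F k) (q:ℂ) (R:ℝ)).coeff j with hA
  have hAb : ∀ k j, ‖A k j‖ ≤ M / (r/2)^j := by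
    intro k j
    have h1 := norm_cauchyPowerSeries_le (F k) (q:ℂ) (R:ℝ) j
    have hmem : ∀ θ : ℝ, circleMap (q:ℂ) (R:ℝ) θ ∈ ball (q:ℂ) r := by
      intro θ
      have := circleMap_mem_sphere (q:ℂ) (by rw [hRr]; positivity : (0:ℝ) ≤ (R:ℝ)) θ
      rw [mem_sphere] at this
      rw [mem_ball, this, hRr]; linarith
    have hcont : ContinuousOn (fun θ : ℝ => ‖F k (circleMap (q:ℂ) (R:ℝ) θ)‖) (Set.uIcc 0 (2*Real.pi)) := by
      apply ContinuousOn.norm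
      exact ((hFd k).continuousOn.comp (continuous_circleMap _ _).continuousOn
        (fun θ _ => hmem θ))
    have hint : (∫ θ : ℝ in (0)..2*Real.pi, ‖F k (circleMap (q:ℂ) (R:ℝ) θ)‖) ≤ 2*Real.pi * M := by
      have := intervalIntegral.integral_mono_on (μ := MeasureTheory.volume)
        (by positivity : (0:ℝ) ≤ 2*Real.pi)
        (hcont.intervalIntegrable) (intervalIntegrable_const (c := M))
        (fun θ _ => hFb k _ (hmem θ))
      simpa using this
    have h2 : ((2*Real.pi)⁻¹ * ∫ θ : ℝ in (0)..2*Real.pi, ‖F k (circleMap (q:ℂ) (R:ℝ) θ)‖)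
        ≤ M := by
      rw [inv_mul_le_iff₀ (by positivity)]
      linarith [hint]
    have h3 : ‖A k j‖ = ‖cauchyPowerSeries (F k) (q:ℂ) (R:ℝ) j‖ :=
      FormalMultilinearSeries.norm_apply_eq_norm_coef.symm
    rw [h3]
    calc ‖cauchyPowerSeries (F k) (q:ℂ) (R:ℝ) j‖
        ≤ ((2*Real.pi)⁻¹ * ∫ θ : ℝ in (0)..2*Real.pi, ‖F k (circleMap (q:ℂ) (R:ℝ) θ)‖) * |(R:ℝ)|⁻¹ ^ j := h1
      _ ≤ M * |(R:ℝ)|⁻¹ ^ j := by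
          apply mul_le_mul_of_nonneg_right h2
          positivity
      _ = M / (r/2)^j := by
          rw [hRr, abs_of_pos (by positivity : (0:ℝ) < r/2)]
          ring_nf
          norm_num
  -- extract a pointwise convergent subsequence of coefficients
  have hcpt : IsSeqCompact (Set.pi Set.univ fun j : ℕ => closedBall (0:ℂ) (M / (r/2)^j)) :=
    (isCompact_univ_pi fun j => isCompact_closedBall _ _).isSeqCompact
  have hmemA : ∀ k, A k ∈ Set.pi Set.univ fun j : ℕ => closedBall (0:ℂ) (M / (r/2)^j) := by
    intro k
    rw [Set.mem_univ_pi]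
    intro j
    rw [mem_closedBall, dist_zero_right]
    exact hAb k j
  obtain ⟨a, ha_mem, φ, hφ, hconv⟩ := hcpt hmemA
  have ha_pt : ∀ j, Tendsto (fun k => A (φ k) j) atTop (𝓝 (a j)) :=
    fun j => tendsto_pi_nhds.mp hconv j
  have ha_b : ∀ j, ‖a j‖ ≤ M / (r/2)^j := by
    intro j
    have := ha_mem j (Set.mem_univ j)
    rwa [mem_closedBall, dist_zero_right] at this
  refine ⟨a, ha_b, ?_⟩
  intro t ht
  set y : ℂ := ((t:ℝ):ℂ) - (q:ℂ) with hy
  have hy4 : ‖y‖ < r/4 := by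
    rw [mem_ball, dist_eq_norm] at ht
    exact ht
  have hy2 : ‖y‖ < r/2 := lt_of_lt_of_le hy4 (by linarith)
  have htr : ((t:ℝ):ℂ) ∈ ball (q:ℂ) r := by
    rw [mem_ball, dist_eq_norm]
    exact lt_of_lt_of_le hy4 (by linarith)
  -- for each k, the power series sums to `x (φ k) t`
  have hsumk : ∀ k, HasSum (fun j => A (φ k) j * y ^ j) (x (φ k) t) := by
    intro k
    have hyball : y ∈ Metric.eball (0:ℂ) R := by
      rw [mem_emetric_ball_zero_iff, enorm_eq_nnnorm, ENNReal.coe_lt_coe, ← NNReal.coe_lt_coe, coe_nnnorm, hRr]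
      exact hy2
    have h := (hps (φ k)).hasSum hyball
    have hqy : (q:ℂ) + y = ((t:ℝ):ℂ) := by rw [hy]; ring
    rw [hqy, hFe (φ k) t htr] at h
    have hf : (fun j => A (φ k) j * y ^ j)
        = (fun n => (cauchyPowerSeries (F (φ k)) (q:ℂ) (R:ℝ) n) fun _ => y) := by
      funext j
      rw [FormalMultilinearSeries.apply_eq_pow_smul_coeff, smul_eq_mul]
      ring
    rw [hf]; exact h
  -- dominated convergence for the series
  have hbound_sum : Summable (fun j : ℕ => M * (1/2:ℝ)^j) :=
    (summable_geometric_of_lt_one (by norm_num) (by norm_num)).mul_left M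
  have hterm_bound : ∀ k j, ‖A (φ k) j * y ^ j‖ ≤ M * (1/2:ℝ)^j := by
    intro k j
    rw [norm_mul, norm_pow]
    calc ‖A (φ k) j‖ * ‖y‖^j ≤ (M / (r/2)^j) * (r/4)^j := by
          apply mul_le_mul (hAb _ j) (pow_le_pow_left₀ (norm_nonneg _) hy4.le j)
            (by positivity) (by positivity)
      _ = M * (1/2:ℝ)^j := by
          rw [div_mul_eq_mul_div, mul_div_assoc, ← div_pow, div_div_div_comm,
            div_self hr.ne', one_div_div]
          norm_num
  have hlim_tsum : Tendsto (fun k => ∑' j, A (φ k) j * y ^ j) atTop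
      (𝓝 (∑' j, a j * y ^ j)) := by
    apply tendsto_tsum_of_dominated_convergence hbound_sum
    · exact fun j => (ha_pt j).mul_const _
    · exact Eventually.of_forall fun k => hterm_bound k
  have hx_t : Tendsto (fun k => x (φ k) t) atTop (𝓝 (g t)) :=
    ((continuous_eval_const t).tendsto g).comp (hxg.comp hφ.tendsto_atTop)
  have heq : (∑' j, a j * y ^ j) = g t := by
    apply tendsto_nhds_unique _ hx_t
    have : (fun k => ∑' j, A (φ k) j * y ^ j) = fun k => x (φ k) t := by
      funext k
      exact (hsumk k).tsum_eq
    rwa [this] at hlim_tsum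
  have hsummable : Summable (fun j => a j * y ^ j) := by
    apply Summable.of_norm_bounded hbound_sum
    intro j
    rw [norm_mul, norm_pow]
    calc ‖a j‖ * ‖y‖^j ≤ (M / (r/2)^j) * (r/4)^j := by
          apply mul_le_mul (ha_b j) (pow_le_pow_left₀ (norm_nonneg _) hy4.le j)
            (by positivity) (by positivity)
      _ = M * (1/2:ℝ)^j := by
          rw [div_mul_eq_mul_div, mul_div_assoc, ← div_pow, div_div_div_comm,
            div_self hr.ne', one_div_div]
          norm_num
  rw [← heq]
  exact hsummable.hasSum

lemma arith {r : ℝ} (M : ℝ) (hr : 0 < r) (j : ℕ) :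
    (M / (r/2)^j) * (r/4)^j = M * (1/2:ℝ)^j := by
  rw [div_mul_eq_mul_div, mul_div_assoc, ← div_pow, div_div_div_comm,
    div_self hr.ne', one_div_div]
  norm_num

lemma real_mem_ball {q r : ℝ} (u : ℝ) (hu : |u - q| < r) :
    ((u:ℝ):ℂ) ∈ ball (q:ℂ) r := by
  rw [mem_ball, dist_eq_norm]
  have h : ((u:ℝ):ℂ) - (q:ℂ) = ((u - q : ℝ):ℂ) := by push_cast; ring
  rw [h, Complex.norm_real]
  exact hu

/-- Every function in the closure of `Ext q r M` is holomorphically extendable near `q`. -/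
lemma closure_subset {q r M : ℝ} (hq : q ∈ Set.Icc (0:ℝ) 1) (hr : 0 < r) (hM : 0 ≤ M)
    {g : C(Set.Icc (0:ℝ) 1, ℂ)} (hg : g ∈ closure (Ext q r M)) :
    ∃ t₀ ∈ Set.Icc (0:ℝ) 1, ∃ rr > (0:ℝ), ∃ F : ℂ → ℂ,
      DifferentiableOn ℂ F (ball (t₀:ℂ) rr) ∧
      ∀ t : Set.Icc (0:ℝ) 1, ((t:ℝ):ℂ) ∈ ball (t₀:ℂ) rr → F ((t:ℝ):ℂ) = g t := by
  obtain ⟨a, hab, hsum⟩ := key hr hM hg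
  have hbound_sum : Summable (fun j : ℕ => M * (1/2:ℝ)^j) :=
    (summable_geometric_of_lt_one (by norm_num) (by norm_num)).mul_left M
  refine ⟨q, hq, r/4, by positivity, fun z => ∑' j, a j * (z - (q:ℂ))^j, ?_, ?_⟩
  · apply differentiableOn_tsum_of_summable_norm hbound_sum
      (fun j => ?_) isOpen_ball (fun j w hw => ?_)
    · exact ((differentiable_const (a j)).mul
        ((differentiable_id.sub_const _).pow j)).differentiableOn
    · rw [norm_mul, norm_pow]
      rw [mem_ball, dist_eq_norm] at hw
      calc ‖a j‖ * ‖w - (q:ℂ)‖^j ≤ (M / (r/2)^j) * (r/4)^j := by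
            apply mul_le_mul (hab j) (pow_le_pow_left₀ (norm_nonneg _) hw.le j)
              (by positivity) (by positivity)
        _ = M * (1/2:ℝ)^j := arith M hr j
  · intro t ht
    exact (hsum t ht).tsum_eq

/-- A quantitative Lipschitz estimate near `q` for functions in the closure of `Ext q r M`. -/
lemma lip {q r M : ℝ} (hr : 0 < r) (hM : 0 ≤ M)
    {g : C(Set.Icc (0:ℝ) 1, ℂ)} (hg : g ∈ closure (Ext q r M))
    (s t : Set.Icc (0:ℝ) 1) (hs : |(s:ℝ) - q| ≤ r/8) (ht : |(t:ℝ) - q| ≤ r/8) :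
    ‖g s - g t‖ ≤ 16*M/r * |(s:ℝ) - (t:ℝ)| := by
  obtain ⟨a, hab, hsum⟩ := key hr hM hg
  set X : ℂ := ((s:ℝ):ℂ) - (q:ℂ) with hX
  set Y : ℂ := ((t:ℝ):ℂ) - (q:ℂ) with hY
  set D : ℝ := |(s:ℝ) - (t:ℝ)| with hD
  have hXn : ‖X‖ ≤ r/8 := by
    have h : X = (((s:ℝ) - q : ℝ):ℂ) := by rw [hX]; push_cast; ring
    rw [h, Complex.norm_real]; exact hs
  have hYn : ‖Y‖ ≤ r/8 := by
    have h : Y = (((t:ℝ) - q : ℝ):ℂ) := by rw [hY]; push_cast; ring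
    rw [h, Complex.norm_real]; exact ht
  have hXY : ‖X - Y‖ = D := by
    have h : X - Y = (((s:ℝ) - (t:ℝ) : ℝ):ℂ) := by rw [hX, hY]; push_cast; ring
    rw [h, Complex.norm_real, Real.norm_eq_abs]
  have hS := (hsum s (real_mem_ball _ (lt_of_le_of_lt hs (by linarith)))).sub
    (hsum t (real_mem_ball _ (lt_of_le_of_lt ht (by linarith))))
  -- power difference bound
  have hpow : ∀ m : ℕ, ‖X^(m+1) - Y^(m+1)‖ ≤ ((m:ℝ)+1) * (r/8)^m * D := by
    intro m
    rw [← geom_sum₂_mul X Y (m+1), norm_mul, hXY]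
    apply mul_le_mul_of_nonneg_right _ (abs_nonneg _)
    calc ‖∑ i ∈ Finset.range (m+1), X^i * Y^(m+1-1-i)‖
        ≤ ∑ i ∈ Finset.range (m+1), ‖X^i * Y^(m+1-1-i)‖ := norm_sum_le _ _
      _ ≤ ∑ i ∈ Finset.range (m+1), (r/8)^m := by
          apply Finset.sum_le_sum
          intro i hi
          rw [norm_mul, norm_pow, norm_pow]
          have hie : i + (m + 1 - 1 - i) = m := by
            have := Finset.mem_range.mp hi; omega
          calc ‖X‖^i * ‖Y‖^(m+1-1-i) ≤ (r/8)^i * (r/8)^(m+1-1-i) := by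
                apply mul_le_mul (pow_le_pow_left₀ (norm_nonneg _) hXn i)
                  (pow_le_pow_left₀ (norm_nonneg _) hYn _) (by positivity) (by positivity)
            _ = (r/8)^m := by rw [← pow_add, hie]
      _ = ((m:ℝ)+1) * (r/8)^m := by
          rw [Finset.sum_const, Finset.card_range, nsmul_eq_mul]
          push_cast; ring
  -- term bound
  have hterm : ∀ j : ℕ, ‖a j * X^j - a j * Y^j‖ ≤ (8*M/r * D) * (1/2:ℝ)^j := by
    intro j
    cases j with
    | zero => simp [hD]; positivity
    | succ m =>
      have h1 : a (m+1) * X^(m+1) - a (m+1) * Y^(m+1) = a (m+1) * (X^(m+1) - Y^(m+1)) := by ring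
      rw [h1, norm_mul]
      have h2 : ‖a (m+1)‖ * ‖X^(m+1) - Y^(m+1)‖
          ≤ (M / (r/2)^(m+1)) * (((m:ℝ)+1) * (r/8)^m * D) := by
        apply mul_le_mul (hab (m+1)) (hpow m) (norm_nonneg _) (by positivity)
      refine h2.trans ?_
      -- arithmetic
      have hhalf : ((m:ℝ)+1) * (1/2:ℝ)^m ≤ 2 := by
        have h1' : ((m:ℝ)+1) ≤ 2^(m+1) := by
          exact_mod_cast (Nat.lt_two_pow_self (n := m+1)).le
        calc ((m:ℝ)+1) * (1/2:ℝ)^m ≤ 2^(m+1) * (1/2:ℝ)^m := by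
              apply mul_le_mul_of_nonneg_right h1' (by positivity)
          _ = 2 := by
              rw [pow_succ, one_div, inv_pow]
              field_simp
      have heq1 : (M / (r/2)^(m+1)) * (((m:ℝ)+1) * (r/8)^m * D)
          = (2*M/r * D) * (((m:ℝ)+1) * ((1/4:ℝ)^m)) := by
        have h8 : (r/8:ℝ) = (r/2)*(1/4) := by ring
        rw [h8, mul_pow, pow_succ]
        have hne : ((r:ℝ)/2)^m ≠ 0 := by positivity
        field_simp
      rw [heq1]
      have heq2 : ((1/4:ℝ)^m) = (1/2:ℝ)^m * (1/2:ℝ)^m := by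
        rw [← mul_pow]; norm_num
      have heq3 : (8*M/r * D) * (1/2:ℝ)^(m+1) = (2*M/r*D) * (2 * (1/2:ℝ)^m) := by
        rw [pow_succ]; ring
      rw [heq2, heq3]
      have hMDr : 0 ≤ 2*M/r*D := by positivity
      apply mul_le_mul_of_nonneg_left _ hMDr
      calc ((m:ℝ)+1) * ((1/2:ℝ)^m * (1/2:ℝ)^m)
          = (((m:ℝ)+1) * (1/2:ℝ)^m) * (1/2:ℝ)^m := by ring
        _ ≤ 2 * (1/2:ℝ)^m := by
            apply mul_le_mul_of_nonneg_right hhalf (by positivity)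
  have hbsum : Summable (fun j : ℕ => (8*M/r * D) * (1/2:ℝ)^j) :=
    (summable_geometric_of_lt_one (by norm_num) (by norm_num)).mul_left _
  have hnsum : Summable (fun j : ℕ => ‖a j * X^j - a j * Y^j‖) :=
    Summable.of_nonneg_of_le (fun j => norm_nonneg _) hterm hbsum
  calc ‖g s - g t‖ = ‖∑' j, (a j * X^j - a j * Y^j)‖ := by rw [hS.tsum_eq]
    _ ≤ ∑' j, ‖a j * X^j - a j * Y^j‖ := norm_tsum_le_tsum_norm hnsum
    _ ≤ ∑' j : ℕ, (8*M/r * D) * (1/2:ℝ)^j := Summable.tsum_le_tsum hterm hnsum hbsum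
    _ = (8*M/r * D) * ∑' j : ℕ, (1/2:ℝ)^j := tsum_mul_left
    _ = 16*M/r * D := by rw [tsum_geometric_two]; ring

/-- The closure of `Ext q r M` has empty interior. -/
lemma interior_empty {q r M : ℝ} (hq : q ∈ Set.Icc (0:ℝ) 1) (hr : 0 < r) (hM : 0 ≤ M) :
    interior (closure (Ext q r M)) = ∅ := by
  by_contra h
  obtain ⟨f, hf⟩ := Set.nonempty_iff_ne_empty.mpr h
  rw [mem_interior_iff_mem_nhds, Metric.mem_nhds_iff] at hf
  obtain ⟨ε, hε, hball⟩ := hf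
  set L : ℝ := 16*M/r with hL
  have hL0 : 0 ≤ L := by positivity
  set δ : ℝ := min (min (r/16) (1/2)) (ε/(8*(L+1))) with hδdef
  have hδ : 0 < δ := by
    apply lt_min (lt_min (by positivity) (by norm_num))
    positivity
  have hδr : δ ≤ r/16 := le_trans (min_le_left _ _) (min_le_left _ _)
  have hδhalf : δ ≤ 1/2 := le_trans (min_le_left _ _) (min_le_right _ _)
  have hδε : δ ≤ ε/(8*(L+1)) := min_le_right _ _
  -- choose the two points
  have hq0 : (0:ℝ) ≤ q := hq.1
  have hq1 : q ≤ 1 := hq.2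
  obtain ⟨p, hp0, hp1, hpq⟩ : ∃ p : ℝ, 0 ≤ p ∧ p ≤ 1 ∧ |p - q| = δ := by
    by_cases hcase : q + δ ≤ 1
    · exact ⟨q + δ, by linarith, hcase, by rw [add_sub_cancel_left, abs_of_pos hδ]⟩
    · refine ⟨q - δ, by nlinarith, by linarith, ?_⟩
      rw [sub_sub_cancel_left, abs_neg, abs_of_pos hδ]
  set sp : Set.Icc (0:ℝ) 1 := ⟨p, hp0, hp1⟩ with hsp
  set tq : Set.Icc (0:ℝ) 1 := ⟨q, hq0, hq1⟩ with htq
  -- the perturbation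
  set hfun : ℝ → ℝ := fun u => (ε/2) * max 0 (1 - |u - p|/δ) with hhfun
  have hfun_cont : Continuous hfun := by
    apply Continuous.mul continuous_const
    apply Continuous.max continuous_const
    apply Continuous.sub continuous_const
    exact ((continuous_id.sub continuous_const).abs).div_const δ
  set pert : C(Set.Icc (0:ℝ) 1, ℂ) :=
    ⟨fun u => ((hfun (u:ℝ) : ℝ) : ℂ), by
      exact Complex.continuous_ofReal.comp (hfun_cont.comp continuous_subtype_val)⟩ with hpert
  have hfun_le : ∀ u : ℝ, |hfun u| ≤ ε/2 := by
    intro u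
    rw [hhfun]
    simp only [abs_mul]
    rw [abs_of_pos (by positivity : (0:ℝ) < ε/2)]
    have h1 : |max 0 (1 - |u - p|/δ)| ≤ 1 := by
      rw [_root_.abs_of_nonneg (le_max_left 0 (1 - |u - p|/δ))]
      apply max_le (by norm_num)
      have : 0 ≤ |u - p|/δ := by positivity
      linarith
    nlinarith
  set g : C(Set.Icc (0:ℝ) 1, ℂ) := f + pert with hgdef
  have hgmem : g ∈ closure (Ext q r M) := by
    apply hball
    rw [mem_ball, ContinuousMap.dist_lt_iff hε]
    intro u
    have hval : dist (g u) (f u) = ‖pert u‖ := by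
      rw [hgdef, dist_eq_norm]
      simp only [ContinuousMap.add_apply, add_sub_cancel_left]
    rw [hval]
    calc ‖pert u‖ = |hfun (u:ℝ)| := by
          rw [hpert]
          simp only [ContinuousMap.coe_mk]
          rw [Complex.norm_real, Real.norm_eq_abs]
      _ ≤ ε/2 := hfun_le _
      _ < ε := by linarith
  have hfmem : f ∈ closure (Ext q r M) := hball (mem_ball_self hε)
  -- apply the Lipschitz bound
  have hsq : |(sp:ℝ) - q| ≤ r/8 := by
    show |p - q| ≤ r/8
    rw [hpq]; linarith
  have htq' : |(tq:ℝ) - q| ≤ r/8 := by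
    show |q - q| ≤ r/8
    simp; positivity
  have hst : |(sp:ℝ) - (tq:ℝ)| = δ := hpq
  have hlf := lip hr hM hfmem sp tq hsq htq'
  have hlg := lip hr hM hgmem sp tq hsq htq'
  rw [hst] at hlf hlg
  -- compute pert at the two points
  have hpert_s : pert sp = ((ε/2 : ℝ) : ℂ) := by
    rw [hpert]
    simp only [ContinuousMap.coe_mk]
    rw [hhfun]
    norm_num [hsp]
  have hpert_t : pert tq = 0 := by
    rw [hpert]
    simp only [ContinuousMap.coe_mk]
    rw [hhfun]
    have : |q - p| = δ := by rw [abs_sub_comm]; exact hpq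
    simp only [htq]
    norm_num [this, div_self hδ.ne']
  have hgs : g sp - g tq = (f sp - f tq) + ((ε/2 : ℝ) : ℂ) := by
    rw [hgdef]
    simp only [ContinuousMap.add_apply]
    rw [hpert_s, hpert_t]
    ring
  have h1 : (ε/2 : ℝ) ≤ ‖g sp - g tq‖ + ‖f sp - f tq‖ := by
    have : ((ε/2 : ℝ) : ℂ) = (g sp - g tq) - (f sp - f tq) := by rw [hgs]; ring
    calc (ε/2 : ℝ) = ‖((ε/2 : ℝ) : ℂ)‖ := by
          rw [Complex.norm_real, Real.norm_eq_abs, abs_of_pos (by positivity)]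
      _ ≤ ‖g sp - g tq‖ + ‖f sp - f tq‖ := by
          rw [this]; exact norm_sub_le _ _
  have h2 : ε/2 ≤ 2 * (L * δ) := by
    rw [hL]
    calc ε/2 ≤ ‖g sp - g tq‖ + ‖f sp - f tq‖ := h1
      _ ≤ 16*M/r * δ + 16*M/r * δ := add_le_add hlg hlf
      _ = 2 * (16*M/r * δ) := by ring
  have h3 : 2 * (L * δ) ≤ ε/4 := by
    have : L * δ ≤ (L+1) * (ε/(8*(L+1))) := by
      apply mul_le_mul (by linarith) hδε hδ.le (by linarith)
    have h4 : (L+1) * (ε/(8*(L+1))) = ε/8 := by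
      field_simp
    nlinarith
  linarith

/-- Clamp a rational into `[0,1]`. -/
def Q (x : ℚ) : ℝ := max 0 (min 1 (x:ℝ))

lemma Q_mem (x : ℚ) : Q x ∈ Set.Icc (0:ℝ) 1 :=
  ⟨le_max_left _ _, max_le (by norm_num) (min_le_left _ _)⟩

lemma Q_eq {x : ℚ} (h0 : 0 ≤ (x:ℝ)) (h1 : (x:ℝ) ≤ 1) : Q x = (x:ℝ) := by
  rw [Q, min_eq_right h1, max_eq_right h0]

/-- The countable family of closed sets. -/
def G (i : ℚ × ℕ × ℕ) : Set C(Set.Icc (0:ℝ) 1, ℂ) :=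
  closure (Ext (Q i.1) (1/((i.2.1:ℝ)+1)) (i.2.2:ℝ))

lemma setEq :
    {f : C(Set.Icc (0 : ℝ) 1, ℂ) | ¬ ∃ t₀ ∈ Set.Icc (0 : ℝ) 1, ∃ r > (0 : ℝ),
        ∃ F : ℂ → ℂ, DifferentiableOn ℂ F (ball (t₀ : ℂ) r) ∧
          ∀ t : Set.Icc (0 : ℝ) 1, ((t : ℝ) : ℂ) ∈ ball (t₀ : ℂ) r →
            F ((t : ℝ) : ℂ) = f t} = ⋂ i : ℚ × ℕ × ℕ, (G i)ᶜ := by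
  ext f
  simp only [Set.mem_setOf_eq, Set.mem_iInter, Set.mem_compl_iff]
  constructor
  · intro hf i hfi
    apply hf
    exact closure_subset (Q_mem i.1) (by positivity) (Nat.cast_nonneg _) hfi
  · intro hf hex
    obtain ⟨t₀, ht₀, r, hr, F, hFd, hFe⟩ := hex
    obtain ⟨n, hn⟩ := exists_nat_one_div_lt (by positivity : (0:ℝ) < r/4)
    set ρ : ℝ := 1/((n:ℝ)+1) with hρ
    have hρpos : 0 < ρ := by positivity
    -- choose a rational q in [0,1] with |q - t₀| < ρ
    obtain ⟨q, hq0, hq1, hqt⟩ : ∃ q : ℚ, 0 ≤ (q:ℝ) ∧ (q:ℝ) ≤ 1 ∧ |(q:ℝ) - t₀| < ρ := by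
      rcases lt_or_eq_of_le ht₀.2 with hlt | heq
      · obtain ⟨q, hq1', hq2'⟩ := exists_rat_btwn (lt_min hlt (by linarith : t₀ < t₀ + ρ))
        refine ⟨q, by linarith [ht₀.1], le_of_lt (lt_of_lt_of_le hq2' (min_le_left _ _)), ?_⟩
        rw [abs_of_pos (by linarith)]
        have := lt_of_lt_of_le hq2' (min_le_right _ _)
        linarith
      · obtain ⟨q, hq1', hq2'⟩ := exists_rat_btwn
          (max_lt (by norm_num) (by linarith : 1 - ρ < 1) : max 0 (1-ρ) < 1)
        refine ⟨q, le_of_lt (lt_of_le_of_lt (le_max_left _ _) hq1'), le_of_lt hq2', ?_⟩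
        rw [heq, abs_of_nonpos (by linarith)]
        have := lt_of_le_of_lt (le_max_right _ _) hq1'
        linarith
    have hdistq : dist ((q:ℝ):ℂ) ((t₀:ℝ):ℂ) < ρ := by
      rw [dist_eq_norm]
      have h : ((q:ℝ):ℂ) - ((t₀:ℝ):ℂ) = (((q:ℝ) - t₀ : ℝ):ℂ) := by push_cast; ring
      rw [h, Complex.norm_real, Real.norm_eq_abs]
      exact hqt
    have hsub : closedBall (((q:ℝ)):ℂ) ρ ⊆ ball ((t₀:ℝ):ℂ) r := by
      intro z hz
      rw [mem_closedBall] at hz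
      rw [mem_ball]
      calc dist z ((t₀:ℝ):ℂ) ≤ dist z ((q:ℝ):ℂ) + dist ((q:ℝ):ℂ) ((t₀:ℝ):ℂ) := dist_triangle _ _ _
        _ < ρ + ρ := by linarith [hdistq]
        _ < r := by linarith [hn]
    obtain ⟨C, hC⟩ := (isCompact_closedBall (((q:ℝ)):ℂ) ρ).exists_bound_of_continuousOn
      (hFd.continuousOn.mono hsub)
    set Mn : ℕ := ⌈max C 0⌉₊ with hMn
    have hfmem : f ∈ Ext ((q:ℝ)) ρ (Mn:ℝ) := by
      refine ⟨F, hFd.mono ((ball_subset_closedBall).trans hsub), ?_, ?_⟩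
      · intro z hz
        calc ‖F z‖ ≤ C := hC z (ball_subset_closedBall hz)
          _ ≤ max C 0 := le_max_left _ _
          _ ≤ (Mn:ℝ) := Nat.le_ceil _
      · intro t htb
        exact hFe t (hsub (ball_subset_closedBall htb))
    have : f ∈ G (q, n, Mn) := by
      have h2 : f ∈ Ext (Q q) (1/((n:ℝ)+1)) ((Mn:ℕ):ℝ) := by
        rwa [Q_eq hq0 hq1, ← hρ]
      exact subset_closure h2
    exact hf (q, n, Mn) this

end Stmt18

set_option synthInstance.maxHeartbeats 1000000 in
open Stmt18 in
/-- The set of continuous functions `f : [0,1] → ℂ` that are nowhere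
holomorphically extendable (no `t₀ ∈ [0,1]`, `r > 0`, and holomorphic
`F : D(t₀, r) → ℂ` with `F = f` on `D(t₀, r) ∩ [0,1]`) is a dense Gδ subset of
`C([0,1])` with the uniform norm. -/
theorem stmt18 :
    IsGδ {f : C(Set.Icc (0 : ℝ) 1, ℂ) | ¬ ∃ t₀ ∈ Set.Icc (0 : ℝ) 1, ∃ r > (0 : ℝ),
        ∃ F : ℂ → ℂ, DifferentiableOn ℂ F (ball (t₀ : ℂ) r) ∧
          ∀ t : Set.Icc (0 : ℝ) 1, ((t : ℝ) : ℂ) ∈ ball (t₀ : ℂ) r →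
            F ((t : ℝ) : ℂ) = f t} ∧
    Dense {f : C(Set.Icc (0 : ℝ) 1, ℂ) | ¬ ∃ t₀ ∈ Set.Icc (0 : ℝ) 1, ∃ r > (0 : ℝ),
        ∃ F : ℂ → ℂ, DifferentiableOn ℂ F (ball (t₀ : ℂ) r) ∧
          ∀ t : Set.Icc (0 : ℝ) 1, ((t : ℝ) : ℂ) ∈ ball (t₀ : ℂ) r →
            F ((t : ℝ) : ℂ) = f t} := by
  rw [setEq]
  constructor
  · exact IsGδ.iInter fun i => (isClosed_closure.isOpen_compl).isGδ
  · apply dense_iInter_of_isOpen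
    · exact fun i => isClosed_closure.isOpen_compl
    · intro i
      rw [← interior_eq_empty_iff_dense_compl]
      exact interior_empty (Q_mem i.1) (by positivity) (Nat.cast_nonneg _)
end
end

section
/- Let γ : [0,1] → ℂ be an injective curve and t₀ ∈ (0,1). Suppose that for every function f defined near t₀ in ℝ: f is expandable as a convergent power series in (t - t₀) near t₀ if and only if f is expandable as f(t) = Σ b_n (γ(t) - γ(t₀))^n near t₀ for some complex power series with positive radius of convergence. Suppose moreover γ is C¹ near t₀. Then γ is analytic at t₀: there exist δ > 0, an open set V ⊆ ℂ containing (t₀-δ, t₀+δ), and an injective holomorphic function φ : V → ℂ with φ = γ on (t₀-δ, t₀+δ). -/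
open Complex Metric Set Filter

lemma aux_hasSum_two (c₀ c₁ : ℂ) (z : ℂ) :
    HasSum (fun n : ℕ => (if n = 0 then c₀ else if n = 1 then c₁ else 0) * z ^ n)
      (c₀ + c₁ * z) := by
  have h0 : ∀ n ∉ ({0, 1} : Finset ℕ),
      (if n = 0 then c₀ else if n = 1 then c₁ else 0) * z ^ n = 0 := by
    intro n hn
    simp only [Finset.mem_insert, Finset.mem_singleton, not_or] at hn
    simp [hn.1, hn.2]
  have h : HasSum _ _ := hasSum_sum_of_ne_finset_zero h0
  simpa using h

lemma aux_analytic (a : ℕ → ℂ) (r : ℝ) (hr : 0 < r)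
    (hsum : Summable fun n : ℕ => a n * (r : ℂ) ^ n) :
    ∃ F : ℂ → ℂ, (∀ z : ℂ, ‖z‖ < r → AnalyticAt ℂ F z) ∧
      ∀ z : ℂ, ‖z‖ < r → HasSum (fun n : ℕ => a n * z ^ n) (F z) := by
  set p : FormalMultilinearSeries ℂ ℂ ℂ :=
    fun n => ContinuousMultilinearMap.mkPiRing ℂ (Fin n) (a n) with hp
  have happ : ∀ (n : ℕ) (z : ℂ), (p n fun _ => z) = a n * z ^ n := by
    intro n z
    simp [hp, ContinuousMultilinearMap.mkPiRing_apply, smul_eq_mul, mul_comm]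
  have hrad : ENNReal.ofReal r ≤ p.radius := by
    have hO : (fun n : ℕ => ‖p n‖ * (r.toNNReal : ℝ) ^ n) =O[atTop] fun _ => (1 : ℝ) := by
      have h1 : Filter.Tendsto (fun n : ℕ => a n * (r : ℂ) ^ n) atTop (nhds 0) :=
        hsum.tendsto_atTop_zero
      have h2 := (h1.isBigO_one ℝ).norm_left
      refine h2.congr' (Filter.Eventually.of_forall fun n => ?_) (by rfl)
      show ‖a n * (r : ℂ) ^ n‖ = ‖p n‖ * (r.toNNReal : ℝ) ^ n
      rw [norm_mul, norm_pow, ContinuousMultilinearMap.norm_mkPiRing, Complex.norm_real,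
        Real.norm_of_nonneg hr.le, Real.coe_toNNReal _ hr.le]
    have h3 := p.le_radius_of_isBigO hO
    simpa [ENNReal.ofReal] using h3
  have hball : ∀ z : ℂ, ‖z‖ < r → z ∈ Metric.eball (0 : ℂ) p.radius := by
    intro z hz
    rw [Metric.mem_eball, edist_zero_right]
    calc (‖z‖₊ : ENNReal) = ENNReal.ofReal ‖z‖ := (ofReal_norm z).symm
      _ < ENNReal.ofReal r := by rw [ENNReal.ofReal_lt_ofReal_iff hr]; exact hz
      _ ≤ p.radius := hrad
  have hball' : ∀ z : ℂ, ‖z‖ < r → HasFPowerSeriesOnBall p.sum p 0 p.radius := by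
    intro z hz
    exact p.hasFPowerSeriesOnBall (lt_of_le_of_lt zero_le (hball z hz))
  refine ⟨p.sum, fun z hz => ?_, fun z hz => ?_⟩
  · have h := (hball' z hz).analyticAt_of_mem (y := z) (by simpa using hball z hz)
    simpa using h
  · have h := p.hasSum (hball z hz)
    refine HasSum.congr_fun h fun n => ?_
    rw [happ]

/-- Let `γ : [0,1] → ℂ` be injective, `t₀ ∈ (0,1)`, and suppose that for
every function `f` defined near `t₀`, `f` is given near `t₀` by a convergent power
series in `t - t₀` iff it is given near `t₀` by a convergent complex power series in
`γ(t) - γ(t₀)` (with positive radius of convergence). If moreover `γ` is `C¹` near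
`t₀`, then `γ` is analytic at `t₀`: it agrees near `t₀` with an injective holomorphic
function defined on an open neighbourhood of `(t₀ - δ, t₀ + δ)` in `ℂ`. -/
theorem stmt19 (γ : ℝ → ℂ) (hγinj : Set.InjOn γ (Set.Icc (0 : ℝ) 1))
    (t₀ : ℝ) (ht₀ : t₀ ∈ Set.Ioo (0 : ℝ) 1)
    (hiff : ∀ f : ℝ → ℂ,
      (∃ a : ℕ → ℂ, ∃ δ > (0 : ℝ), ∀ t : ℝ, |t - t₀| < δ →
          HasSum (fun n : ℕ => a n * ((t : ℂ) - (t₀ : ℂ)) ^ n) (f t)) ↔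
      (∃ b : ℕ → ℂ, (∃ s > (0 : ℝ), ∀ z : ℂ, ‖z‖ < s →
          Summable (fun n : ℕ => b n * z ^ n)) ∧
        ∃ ε > (0 : ℝ), ∀ t : ℝ, |t - t₀| < ε →
          HasSum (fun n : ℕ => b n * (γ t - γ t₀) ^ n) (f t)))
    (hC1 : ∃ η > (0 : ℝ), ContDiffOn ℝ 1 γ (Set.Ioo (t₀ - η) (t₀ + η))) :
    ∃ δ > (0 : ℝ), ∃ V : Set ℂ, IsOpen V ∧
      (∀ t : ℝ, |t - t₀| < δ → (t : ℂ) ∈ V) ∧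
      ∃ φ : ℂ → ℂ, DifferentiableOn ℂ φ V ∧ Set.InjOn φ V ∧
        ∀ t : ℝ, |t - t₀| < δ → φ (t : ℂ) = γ t := by
  classical
  have hnorm : ∀ t : ℝ, ‖((t : ℂ)) - (t₀ : ℂ)‖ = |t - t₀| := by
    intro t
    rw [← Complex.ofReal_sub, Complex.norm_real, Real.norm_eq_abs]
  -- Step 1: γ is given by a real power series near t₀
  obtain ⟨a, δ₁, hδ₁, H1⟩ : ∃ a : ℕ → ℂ, ∃ δ > (0 : ℝ), ∀ t : ℝ, |t - t₀| < δ →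
      HasSum (fun n : ℕ => a n * ((t : ℂ) - (t₀ : ℂ)) ^ n) (γ t) := by
    apply (hiff γ).mpr
    refine ⟨fun n => if n = 0 then γ t₀ else if n = 1 then 1 else 0,
      ⟨1, one_pos, fun z _ => ?_⟩, 1, one_pos, fun t _ => ?_⟩
    · exact (aux_hasSum_two (γ t₀) 1 z).summable
    · simpa using aux_hasSum_two (γ t₀) 1 (γ t - γ t₀)
  -- Step 2: the identity is a power series in γ(t) - γ(t₀)
  obtain ⟨b, ⟨s, hs, hbsum⟩, ε, hε, H3⟩ := (hiff fun t => (t : ℂ)).mp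
    ⟨fun n => if n = 0 then (t₀ : ℂ) else if n = 1 then 1 else 0, 1, one_pos,
      fun t _ => by simpa using aux_hasSum_two (t₀ : ℂ) 1 ((t : ℂ) - (t₀ : ℂ))⟩
  -- Build the holomorphic extension F of γ
  have hsummF : Summable fun n : ℕ => a n * ((δ₁ / 2 : ℝ) : ℂ) ^ n := by
    have habs : |t₀ + δ₁ / 2 - t₀| < δ₁ := by
      rw [add_sub_cancel_left, abs_of_pos (by positivity)]
      linarith
    have h := (H1 (t₀ + δ₁ / 2) habs).summable
    have he : ((t₀ + δ₁ / 2 : ℝ) : ℂ) - (t₀ : ℂ) = ((δ₁ / 2 : ℝ) : ℂ) := by push_cast; ring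
    rwa [he] at h
  obtain ⟨F, hFan, hFsum⟩ := aux_analytic a (δ₁ / 2) (by positivity) hsummF
  set φ : ℂ → ℂ := fun z => F (z - (t₀ : ℂ)) with hφdef
  have hφan : ∀ z : ℂ, ‖z - (t₀ : ℂ)‖ < δ₁ / 2 → AnalyticAt ℂ φ z := by
    intro z hz
    have h1 : AnalyticAt ℂ (fun w : ℂ => w - (t₀ : ℂ)) z := analyticAt_id.sub analyticAt_const
    exact AnalyticAt.comp (f := fun w : ℂ => w - (t₀ : ℂ)) (hFan _ hz) h1
  have hφγ : ∀ t : ℝ, |t - t₀| < δ₁ / 2 → φ (t : ℂ) = γ t := by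
    intro t ht
    have h1 := hFsum ((t : ℂ) - (t₀ : ℂ)) (by rwa [hnorm])
    have h2 := H1 t (by linarith)
    exact h1.unique h2
  have hφt₀ : φ (t₀ : ℂ) = γ t₀ := hφγ t₀ (by simpa using by positivity)
  -- Build the holomorphic inverse G
  have hsummG : Summable fun n : ℕ => b n * ((s / 2 : ℝ) : ℂ) ^ n := by
    apply hbsum
    rw [Complex.norm_real, Real.norm_of_nonneg (by positivity : (0:ℝ) ≤ s / 2)]
    linarith
  obtain ⟨G, hGan, hGsum⟩ := aux_analytic b (s / 2) (by positivity) hsummG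
  have hgγ : ∀ t : ℝ, |t - t₀| < ε → ‖γ t - γ t₀‖ < s / 2 → G (γ t - γ t₀) = (t : ℂ) := by
    intro t ht hts
    exact (hGsum _ hts).unique (H3 t ht)
  -- Continuity of φ at t₀ : choose a ball mapped into the s/2-ball around γ t₀
  have hφcont : ContinuousAt φ (t₀ : ℂ) :=
    (hφan (t₀ : ℂ) (by simpa using by positivity)).continuousAt
  obtain ⟨δ₀, hδ₀, hδ₀s⟩ := Metric.continuousAt_iff.mp hφcont (s / 2) (by positivity)
  set r' : ℝ := min δ₀ (δ₁ / 2) with hr'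
  have hr'pos : 0 < r' := lt_min hδ₀ (by positivity)
  have hmap : ∀ z : ℂ, z ∈ ball ((t₀ : ℂ)) r' → ‖φ z - γ t₀‖ < s / 2 := by
    intro z hz
    have : dist z (t₀ : ℂ) < δ₀ := lt_of_lt_of_le (mem_ball.mp hz) (min_le_left _ _)
    have := hδ₀s this
    rwa [dist_eq_norm, hφt₀] at this
  set U : Set ℂ := ball ((t₀ : ℂ)) r' with hU
  set h : ℂ → ℂ := fun z => G (φ z - γ t₀) with hh
  have hzU : ∀ z ∈ U, ‖z - (t₀ : ℂ)‖ < δ₁ / 2 := by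
    intro z hz
    have : dist z (t₀ : ℂ) < r' := mem_ball.mp hz
    rw [dist_eq_norm] at this
    exact lt_of_lt_of_le this (min_le_right _ _)
  have hhan : AnalyticOnNhd ℂ h U := by
    intro z hz
    have h1 : AnalyticAt ℂ (fun w : ℂ => φ w - γ t₀) z :=
      (hφan z (hzU z hz)).sub analyticAt_const
    exact AnalyticAt.comp (f := fun w : ℂ => φ w - γ t₀) (hGan _ (hmap z hz)) h1
  have hidan : AnalyticOnNhd ℂ (fun z : ℂ => z) U := fun z _ => analyticAt_id
  -- frequently h = id near t₀
  set c : ℝ := min r' ε / 2 with hc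
  have hcpos : 0 < c := by positivity
  have hseq : ∀ n : ℕ, h ((↑(t₀ + c / (n + 1)) : ℂ)) = (↑(t₀ + c / (n + 1)) : ℂ) := by
    intro n
    set t : ℝ := t₀ + c / (n + 1) with htdef
    have habs : |t - t₀| = c / (n + 1) := by
      rw [htdef, add_sub_cancel_left, abs_of_pos (by positivity)]
    have hlt : c / (n + 1) ≤ c := by
      apply div_le_self hcpos.le; exact le_add_of_nonneg_left (Nat.cast_nonneg n)
    have hltr' : |t - t₀| < r' := by
      rw [habs]; calc c / (n+1) ≤ c := hlt
        _ < r' := by rw [hc]; have := lt_min hr'pos hε; linarith [min_le_left r' ε,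
          (div_lt_self (lt_min hr'pos hε) one_lt_two)]
    have hltε : |t - t₀| < ε := by
      rw [habs]; calc c / (n+1) ≤ c := hlt
        _ < ε := by rw [hc]; linarith [min_le_right r' ε,
          (div_lt_self (lt_min hr'pos hε) one_lt_two)]
    have htU : ((t : ℝ) : ℂ) ∈ U := by
      rw [hU, mem_ball, dist_eq_norm, hnorm]; exact hltr'
    have hφt : φ ((t : ℝ) : ℂ) = γ t := hφγ t (lt_of_lt_of_le hltr' (min_le_right _ _))
    have hγs : ‖γ t - γ t₀‖ < s / 2 := by
      rw [← hφt]; exact hmap _ htU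
    rw [hh]
    simp only
    rw [hφt, hgγ t hltε hγs]
  have htend : Filter.Tendsto (fun n : ℕ => (↑(t₀ + c / (n + 1)) : ℂ)) atTop
      (nhdsWithin ((t₀ : ℂ)) {(t₀ : ℂ)}ᶜ) := by
    apply tendsto_nhdsWithin_of_tendsto_nhds_of_eventually_within
    · have h1 : Filter.Tendsto (fun n : ℕ => t₀ + c / (n + 1)) atTop (nhds t₀) := by
        have := (tendsto_one_div_add_atTop_nhds_zero_nat).const_mul c
        simp only [mul_one_div] at this
        simpa using tendsto_const_nhds.add this
      exact (Complex.continuous_ofReal.continuousAt.tendsto).comp h1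
    · apply Filter.Eventually.of_forall
      intro n
      simp only [mem_compl_iff, mem_singleton_iff]
      intro hcontra
      have : t₀ + c / (n + 1) = t₀ := by exact_mod_cast hcontra
      have : c / (n + 1) = 0 := by linarith
      have : (0 : ℝ) < c / (n + 1) := by positivity
      linarith
  have hfreq : ∃ᶠ z in nhdsWithin ((t₀ : ℂ)) {(t₀ : ℂ)}ᶜ, h z = z :=
    htend.frequently (Filter.Frequently.of_forall hseq)
  have heqon : EqOn h (fun z : ℂ => z) U :=
    hhan.eqOn_of_preconnected_of_frequently_eq hidan (convex_ball _ _).isPreconnected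
      (mem_ball_self hr'pos) hfreq
  -- Conclusion
  refine ⟨r', hr'pos, U, isOpen_ball, fun t ht => ?_, φ, ?_, ?_, ?_⟩
  · rw [hU, mem_ball, dist_eq_norm, hnorm]; exact ht
  · intro z hz
    exact ((hφan z (hzU z hz)).differentiableAt).differentiableWithinAt
  · intro x hx y hy hxy
    have h1 : h x = h y := by rw [hh]; simp only; rw [hxy]
    have h2 := heqon hx
    have h3 := heqon hy
    simp only at h2 h3
    rw [h2, h3] at h1
    exact h1
  · intro t ht
    exact hφγ t (lt_of_lt_of_le ht (min_le_right _ _))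
end
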